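/- arXiv:2302.11073 — 6 statements merged into one kernel-verified Lean document; each statement's English description precedes it below -/
import Mathlib

section
/- Let n, k be integers with k ≥ 1, and let γ be a real number with 0 < γ and k < n/2 − γ; set a₀ = (n−k−2)/2. Then for every real β with 0 < β ≤ k/2, the function a ↦ Θⁱ(γ,a,β) is strictly increasing on the interval [a₀, ∞). -/
open scoped Nat


/-- The Fourier symbol `Θ(a,b)` at a purely imaginary argument `b = βi`:
`Θⁱ(γ,a,β) = 4^γ · Γ((1+γ+a+β)/2) · Γ((1+γ+a−β)/2) / (Γ((1−γ+a+β)/2) · Γ((1−γ+a−β)/2))`. -/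
noncomputable def ThetaI (γ a β : ℝ) : ℝ :=
  (4 : ℝ) ^ γ * Real.Gamma ((1 + γ + a + β) / 2) * Real.Gamma ((1 + γ + a - β) / 2) /
    (Real.Gamma ((1 - γ + a + β) / 2) * Real.Gamma ((1 - γ + a - β) / 2))

private lemma aux_div_le {K1 K2 A B D1 D2 : ℝ} (hA : 0 ≤ A) (hAB : A = B)
    (hD1 : 0 < D1) (hD2 : 0 < D2) (h : K1 * D2 ≤ K2 * D1) :
    K1 * (A / D1) ≤ K2 * (B / D2) := by
  subst hAB
  rw [mul_div_assoc', mul_div_assoc', div_le_div_iff₀ hD1 hD2]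
  nlinarith [mul_le_mul_of_nonneg_left h hA]

/-- Key inequality: for `0 < s < t` and `γ > 0`,
`t(s+γ)·Γ(s+γ)·Γ(t) ≤ s(t+γ)·Γ(t+γ)·Γ(s)`, via the Gauss product formula. -/
lemma gamma_cross_le (γ : ℝ) (hγ : 0 < γ) {s t : ℝ} (hs : 0 < s) (hst : s < t) :
    (t * (s + γ)) * (Real.Gamma (s + γ) * Real.Gamma t) ≤
      (s * (t + γ)) * (Real.Gamma (t + γ) * Real.Gamma s) := by
  have ht : 0 < t := hs.trans hst
  have hineq : ∀ n : ℕ, 1 ≤ n →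
      (t * (s + γ)) * (Real.GammaSeq (s + γ) n * Real.GammaSeq t n) ≤
        (s * (t + γ)) * (Real.GammaSeq (t + γ) n * Real.GammaSeq s n) := by
    intro n hn
    have hn0 : (0:ℝ) < (n:ℝ) := by exact_mod_cast hn
    have hP : ∀ x : ℝ, 0 < x → 0 < ∏ j ∈ Finset.range (n + 1), (x + (j:ℝ)) := by
      intro x hx
      exact Finset.prod_pos fun j _ => by positivity
    -- product inequality
    have hprod : (t * (s + γ)) * ((∏ j ∈ Finset.range (n + 1), (t + γ + (j:ℝ))) *
        (∏ j ∈ Finset.range (n + 1), (s + (j:ℝ)))) ≤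
        (s * (t + γ)) * ((∏ j ∈ Finset.range (n + 1), (s + γ + (j:ℝ))) *
        (∏ j ∈ Finset.range (n + 1), (t + (j:ℝ)))) := by
      have e1 : ∀ x : ℝ, (∏ j ∈ Finset.range (n + 1), (x + (j:ℝ)))
          = (∏ j ∈ Finset.range n, (x + ((j:ℝ) + 1))) * x := by
        intro x
        rw [Finset.prod_range_succ']
        push_cast
        simp
      rw [e1, e1, e1, e1]
      have hrest : (∏ j ∈ Finset.range n, (t + γ + ((j:ℝ) + 1))) *
          (∏ j ∈ Finset.range n, (s + ((j:ℝ) + 1))) ≤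
          (∏ j ∈ Finset.range n, (s + γ + ((j:ℝ) + 1))) *
          (∏ j ∈ Finset.range n, (t + ((j:ℝ) + 1))) := by
        rw [← Finset.prod_mul_distrib, ← Finset.prod_mul_distrib]
        refine Finset.prod_le_prod (fun j _ => by positivity) (fun j _ => ?_)
        nlinarith [(Nat.cast_nonneg j : (0:ℝ) ≤ (j:ℝ))]
      calc (t * (s + γ)) * ((∏ j ∈ Finset.range n, (t + γ + ((j:ℝ) + 1))) * (t + γ) *
            ((∏ j ∈ Finset.range n, (s + ((j:ℝ) + 1))) * s))
          = ((∏ j ∈ Finset.range n, (t + γ + ((j:ℝ) + 1))) *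
            (∏ j ∈ Finset.range n, (s + ((j:ℝ) + 1)))) * (t * (s + γ) * (t + γ) * s) := by ring
        _ ≤ ((∏ j ∈ Finset.range n, (s + γ + ((j:ℝ) + 1))) *
            (∏ j ∈ Finset.range n, (t + ((j:ℝ) + 1)))) * (t * (s + γ) * (t + γ) * s) := by
            refine mul_le_mul_of_nonneg_right hrest (by positivity)
        _ = (s * (t + γ)) * ((∏ j ∈ Finset.range n, (s + γ + ((j:ℝ) + 1))) * (s + γ) *
            ((∏ j ∈ Finset.range n, (t + ((j:ℝ) + 1))) * t)) := by ring
    have hpow : (n:ℝ) ^ (s + γ) * (n:ℝ) ^ t = (n:ℝ) ^ (t + γ) * (n:ℝ) ^ s := by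
      rw [← Real.rpow_add hn0, ← Real.rpow_add hn0]
      ring_nf
    simp only [Real.GammaSeq]
    rw [div_mul_div_comm, div_mul_div_comm]
    refine aux_div_le (by positivity) ?_ (mul_pos (hP _ (by linarith)) (hP _ ht))
      (mul_pos (hP _ (by linarith)) (hP _ hs)) hprod
    linear_combination (((n ! : ℕ) : ℝ) * ((n ! : ℕ) : ℝ)) * hpow
  have hT1 : Filter.Tendsto
      (fun n => (t * (s + γ)) * (Real.GammaSeq (s + γ) n * Real.GammaSeq t n))
      Filter.atTop (nhds ((t * (s + γ)) * (Real.Gamma (s + γ) * Real.Gamma t))) :=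
    ((Real.GammaSeq_tendsto_Gamma (s + γ)).mul (Real.GammaSeq_tendsto_Gamma t)).const_mul _
  have hT2 : Filter.Tendsto
      (fun n => (s * (t + γ)) * (Real.GammaSeq (t + γ) n * Real.GammaSeq s n))
      Filter.atTop (nhds ((s * (t + γ)) * (Real.Gamma (t + γ) * Real.Gamma s))) :=
    ((Real.GammaSeq_tendsto_Gamma (t + γ)).mul (Real.GammaSeq_tendsto_Gamma s)).const_mul _
  exact le_of_tendsto_of_tendsto hT1 hT2 (Filter.eventually_atTop.mpr ⟨1, hineq⟩)

lemma gamma_cross_lt (γ : ℝ) (hγ : 0 < γ) {s t : ℝ} (hs : 0 < s) (hst : s < t) :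
    Real.Gamma (s + γ) * Real.Gamma t < Real.Gamma (t + γ) * Real.Gamma s := by
  have ht : 0 < t := hs.trans hst
  have h := gamma_cross_le γ hγ hs hst
  have h1 : 0 < Real.Gamma (s + γ) * Real.Gamma t :=
    mul_pos (Real.Gamma_pos_of_pos (by linarith)) (Real.Gamma_pos_of_pos ht)
  have h2 : 0 < Real.Gamma (t + γ) * Real.Gamma s :=
    mul_pos (Real.Gamma_pos_of_pos (by linarith)) (Real.Gamma_pos_of_pos hs)
  have hP : 0 < s * (t + γ) := by positivity
  nlinarith [h, hP, mul_pos (mul_pos hγ (sub_pos.mpr hst)) h1]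

lemma gamma_ratio_strictMono (γ : ℝ) (hγ : 0 < γ) {s t : ℝ} (hs : 0 < s) (hst : s < t) :
    Real.Gamma (s + γ) / Real.Gamma s < Real.Gamma (t + γ) / Real.Gamma t := by
  have ht : 0 < t := hs.trans hst
  rw [div_lt_div_iff₀ (Real.Gamma_pos_of_pos hs) (Real.Gamma_pos_of_pos ht)]
  have := gamma_cross_lt γ hγ hs hst
  linarith

theorem stmt1 (n k : ℤ) (hk : 1 ≤ k) (γ : ℝ) (hγ : 0 < γ)
    (hkn : (k : ℝ) < (n : ℝ) / 2 - γ) :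
    ∀ β : ℝ, 0 < β → β ≤ (k : ℝ) / 2 →
      StrictMonoOn (fun a : ℝ => ThetaI γ a β)
        (Set.Ici (((n : ℝ) - (k : ℝ) - 2) / 2)) := by
  intro β hβ hβk a₁ ha₁ a₂ ha₂ h12
  simp only [Set.mem_Ici] at ha₁ ha₂
  have hsM : ∀ a : ℝ, ((n : ℝ) - (k : ℝ) - 2) / 2 ≤ a → 0 < (1 - γ + a - β) / 2 := by
    intro a ha; linarith
  have hsP : ∀ a : ℝ, ((n : ℝ) - (k : ℝ) - 2) / 2 ≤ a → 0 < (1 - γ + a + β) / 2 := by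
    intro a ha; linarith
  have key : ∀ a : ℝ, 0 < (1 - γ + a + β) / 2 → 0 < (1 - γ + a - β) / 2 → ThetaI γ a β =
      (4 : ℝ) ^ γ * (Real.Gamma ((1 - γ + a + β) / 2 + γ) / Real.Gamma ((1 - γ + a + β) / 2))
        * (Real.Gamma ((1 - γ + a - β) / 2 + γ) / Real.Gamma ((1 - γ + a - β) / 2)) := by
    intro a h1 h2
    have hB := (Real.Gamma_pos_of_pos h1).ne'
    have hD := (Real.Gamma_pos_of_pos h2).ne'
    have e1 : (1 + γ + a + β) / 2 = (1 - γ + a + β) / 2 + γ := by ring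
    have e2 : (1 + γ + a - β) / 2 = (1 - γ + a - β) / 2 + γ := by ring
    rw [ThetaI, e1, e2]
    field_simp
  show ThetaI γ a₁ β < ThetaI γ a₂ β
  rw [key a₁ (hsP a₁ ha₁) (hsM a₁ ha₁), key a₂ (hsP a₂ ha₂) (hsM a₂ ha₂)]
  have h4 : (0:ℝ) < (4 : ℝ) ^ γ := Real.rpow_pos_of_pos (by norm_num) γ
  have hp1 := gamma_ratio_strictMono γ hγ (hsP a₁ ha₁)
    (show (1 - γ + a₁ + β) / 2 < (1 - γ + a₂ + β) / 2 by linarith)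
  have hp2 := gamma_ratio_strictMono γ hγ (hsM a₁ ha₁)
    (show (1 - γ + a₁ - β) / 2 < (1 - γ + a₂ - β) / 2 by linarith)
  have pos2 : 0 < Real.Gamma ((1 - γ + a₁ - β) / 2 + γ) / Real.Gamma ((1 - γ + a₁ - β) / 2) :=
    div_pos (Real.Gamma_pos_of_pos (by have := hsM a₁ ha₁; linarith))
      (Real.Gamma_pos_of_pos (hsM a₁ ha₁))
  have h1 : (4 : ℝ) ^ γ * (Real.Gamma ((1 - γ + a₁ + β) / 2 + γ) / Real.Gamma ((1 - γ + a₁ + β) / 2))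
      < (4 : ℝ) ^ γ * (Real.Gamma ((1 - γ + a₂ + β) / 2 + γ) / Real.Gamma ((1 - γ + a₂ + β) / 2)) :=
    (mul_lt_mul_iff_right₀ h4).mpr hp1
  have pos1 : 0 < Real.Gamma ((1 - γ + a₁ + β) / 2 + γ) / Real.Gamma ((1 - γ + a₁ + β) / 2) :=
    div_pos (Real.Gamma_pos_of_pos (by have := hsP a₁ ha₁; linarith))
      (Real.Gamma_pos_of_pos (hsP a₁ ha₁))
  exact mul_lt_mul'' h1 hp2 (mul_pos h4 pos1).le pos2.le
end

section
/- Let n, k be integers with k ≥ 1, and let γ be a real number with 0 < γ and k < n/2 − γ; set a₀ = (n−k−2)/2. Then for every real a ≥ a₀, the function β ↦ Θⁱ(γ,a,β) is strictly decreasing on the interval [0, k/2]. -/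
open Real Filter Finset Topology

private lemma fac_pos {s x : ℝ} (hx : 0 ≤ x) (hxs : x < s) (y : ℝ) (hy : 0 ≤ y) :
    0 < (s + y) ^ 2 - x ^ 2 := by nlinarith

private lemma factor_le {q γ x₁ x₂ : ℝ} (hγ : 0 < γ) (hx₁ : 0 ≤ x₁) (h12 : x₁ < x₂)
    (h2q : x₂ < q) (y : ℝ) (hy : 0 ≤ y) :
    ((q + γ + y) ^ 2 - x₁ ^ 2) * ((q + y) ^ 2 - x₂ ^ 2) ≤
      ((q + γ + y) ^ 2 - x₂ ^ 2) * ((q + y) ^ 2 - x₁ ^ 2) := by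
  have hq : 0 < q := lt_of_le_of_lt hx₁ (h12.trans h2q)
  have h1 : 0 ≤ (q + γ + y) ^ 2 - (q + y) ^ 2 := by nlinarith
  have h2 : 0 ≤ x₂ ^ 2 - x₁ ^ 2 := by nlinarith
  nlinarith [mul_nonneg h1 h2]

private lemma gamma_key {q γ x₁ x₂ : ℝ} (hγ : 0 < γ) (hx₁ : 0 ≤ x₁) (h12 : x₁ < x₂)
    (h2q : x₂ < q) :
    Real.Gamma (q + γ + x₂) * Real.Gamma (q + γ - x₂) *
        (Real.Gamma (q + x₁) * Real.Gamma (q - x₁)) <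
      Real.Gamma (q + γ + x₁) * Real.Gamma (q + γ - x₁) *
        (Real.Gamma (q + x₂) * Real.Gamma (q - x₂)) := by
  have hq : 0 < q := lt_of_le_of_lt hx₁ (h12.trans h2q)
  have hx₂ : 0 ≤ x₂ := hx₁.trans h12.le
  have h2qγ : x₂ < q + γ := h2q.trans (by linarith)
  have h1q : x₁ < q := h12.trans h2q
  have h1qγ : x₁ < q + γ := h1q.trans (by linarith)
  set c : ℝ := (((q + γ) ^ 2 - x₁ ^ 2) * (q ^ 2 - x₂ ^ 2)) /
      (((q + γ) ^ 2 - x₂ ^ 2) * (q ^ 2 - x₁ ^ 2)) with hc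
  have hb0 : 0 < ((q + γ) ^ 2 - x₂ ^ 2) * (q ^ 2 - x₁ ^ 2) :=
    mul_pos (by nlinarith) (by nlinarith)
  have ha0' : 0 < ((q + γ) ^ 2 - x₁ ^ 2) * (q ^ 2 - x₂ ^ 2) :=
    mul_pos (by nlinarith) (by nlinarith)
  have hc0 : 0 < c := div_pos ha0' hb0
  have hc1 : c < 1 := by
    rw [hc, div_lt_one hb0]
    nlinarith [mul_pos (show (0:ℝ) < (q + γ) ^ 2 - q ^ 2 by nlinarith)
      (show (0:ℝ) < x₂ ^ 2 - x₁ ^ 2 by nlinarith)]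
  -- the per-n inequality
  have hineq : ∀ n : ℕ, 1 ≤ n →
      Real.GammaSeq (q + γ + x₂) n * Real.GammaSeq (q + γ - x₂) n *
          (Real.GammaSeq (q + x₁) n * Real.GammaSeq (q - x₁) n) ≤
        c * (Real.GammaSeq (q + γ + x₁) n * Real.GammaSeq (q + γ - x₁) n *
          (Real.GammaSeq (q + x₂) n * Real.GammaSeq (q - x₂) n)) := by
    intro n hn
    have hn0 : (0:ℝ) < n := by exact_mod_cast hn
    have hP : ∀ u x : ℝ,
        (∏ j ∈ Finset.range (n + 1), (u + x + (j : ℝ))) *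
          ∏ j ∈ Finset.range (n + 1), (u - x + (j : ℝ)) =
        ∏ j ∈ Finset.range (n + 1), ((u + (j : ℝ)) ^ 2 - x ^ 2) := by
      intro u x
      rw [← Finset.prod_mul_distrib]
      exact Finset.prod_congr rfl fun j _ => by ring
    set Db := ∏ j ∈ Finset.range (n + 1),
        (((q + γ + (j : ℝ)) ^ 2 - x₂ ^ 2) * ((q + (j : ℝ)) ^ 2 - x₁ ^ 2)) with hDb
    set Da := ∏ j ∈ Finset.range (n + 1),
        (((q + γ + (j : ℝ)) ^ 2 - x₁ ^ 2) * ((q + (j : ℝ)) ^ 2 - x₂ ^ 2)) with hDa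
    have hDbpos : 0 < Db := Finset.prod_pos fun j _ =>
      mul_pos (fac_pos hx₂ h2qγ _ (Nat.cast_nonneg j)) (fac_pos hx₁ h1q _ (Nat.cast_nonneg j))
    have hDapos : 0 < Da := Finset.prod_pos fun j _ =>
      mul_pos (fac_pos hx₁ h1qγ _ (Nat.cast_nonneg j)) (fac_pos hx₂ h2q _ (Nat.cast_nonneg j))
    set N : ℝ := (n:ℝ) ^ (q + γ + x₂) * (n:ℝ) ^ (q + γ - x₂) *
        ((n:ℝ) ^ (q + x₁) * (n:ℝ) ^ (q - x₁)) * (n.factorial : ℝ) ^ 4 with hN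
    have hNpos : 0 < N := by
      have : (0:ℝ) < (n.factorial : ℝ) := by exact_mod_cast n.factorial_pos
      positivity
    have hNeq : (n:ℝ) ^ (q + γ + x₂) * (n:ℝ) ^ (q + γ - x₂) *
        ((n:ℝ) ^ (q + x₁) * (n:ℝ) ^ (q - x₁)) =
        (n:ℝ) ^ (q + γ + x₁) * (n:ℝ) ^ (q + γ - x₁) *
        ((n:ℝ) ^ (q + x₂) * (n:ℝ) ^ (q - x₂)) := by
      rw [← Real.rpow_add hn0, ← Real.rpow_add hn0, ← Real.rpow_add hn0,
        ← Real.rpow_add hn0, ← Real.rpow_add hn0, ← Real.rpow_add hn0]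
      congr 1
      ring
    have hL : Real.GammaSeq (q + γ + x₂) n * Real.GammaSeq (q + γ - x₂) n *
        (Real.GammaSeq (q + x₁) n * Real.GammaSeq (q - x₁) n) = N / Db := by
      rw [hN, hDb, Finset.prod_mul_distrib, ← hP (q + γ) x₂, ← hP q x₁]
      simp only [Real.GammaSeq]
      ring
    have hR : Real.GammaSeq (q + γ + x₁) n * Real.GammaSeq (q + γ - x₁) n *
        (Real.GammaSeq (q + x₂) n * Real.GammaSeq (q - x₂) n) = N / Da := by
      rw [hN, hNeq, hDa, Finset.prod_mul_distrib, ← hP (q + γ) x₁, ← hP q x₂]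
      simp only [Real.GammaSeq]
      ring
    -- product inequality : Da ≤ c * Db
    have hprod : Da ≤ c * Db := by
      rw [hDa, hDb, Finset.prod_range_succ', Finset.prod_range_succ']
      have ha0 : (((q + γ + ((0:ℕ):ℝ)) ^ 2 - x₁ ^ 2) * ((q + ((0:ℕ):ℝ)) ^ 2 - x₂ ^ 2)) =
          c * (((q + γ + ((0:ℕ):ℝ)) ^ 2 - x₂ ^ 2) * ((q + ((0:ℕ):ℝ)) ^ 2 - x₁ ^ 2)) := by
        push_cast
        rw [add_zero, add_zero, hc, div_mul_cancel₀ _ hb0.ne']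
      have hstep : (∏ j ∈ Finset.range n,
            (((q + γ + ((j+1:ℕ):ℝ)) ^ 2 - x₁ ^ 2) * ((q + ((j+1:ℕ):ℝ)) ^ 2 - x₂ ^ 2))) ≤
          ∏ j ∈ Finset.range n,
            (((q + γ + ((j+1:ℕ):ℝ)) ^ 2 - x₂ ^ 2) * ((q + ((j+1:ℕ):ℝ)) ^ 2 - x₁ ^ 2)) := by
        refine Finset.prod_le_prod (fun j _ => ?_) (fun j _ => ?_)
        · exact le_of_lt (mul_pos (fac_pos hx₁ h1qγ _ (Nat.cast_nonneg _))
            (fac_pos hx₂ h2q _ (Nat.cast_nonneg _)))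
        · exact factor_le hγ hx₁ h12 h2q _ (Nat.cast_nonneg _)
      have ha0nn : 0 ≤ (((q + γ + ((0:ℕ):ℝ)) ^ 2 - x₁ ^ 2) * ((q + ((0:ℕ):ℝ)) ^ 2 - x₂ ^ 2)) :=
        le_of_lt (mul_pos (fac_pos hx₁ h1qγ _ (Nat.cast_nonneg _))
          (fac_pos hx₂ h2q _ (Nat.cast_nonneg _)))
      calc (∏ j ∈ Finset.range n,
            (((q + γ + ((j+1:ℕ):ℝ)) ^ 2 - x₁ ^ 2) * ((q + ((j+1:ℕ):ℝ)) ^ 2 - x₂ ^ 2))) *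
            (((q + γ + ((0:ℕ):ℝ)) ^ 2 - x₁ ^ 2) * ((q + ((0:ℕ):ℝ)) ^ 2 - x₂ ^ 2))
          ≤ (∏ j ∈ Finset.range n,
            (((q + γ + ((j+1:ℕ):ℝ)) ^ 2 - x₂ ^ 2) * ((q + ((j+1:ℕ):ℝ)) ^ 2 - x₁ ^ 2))) *
            (((q + γ + ((0:ℕ):ℝ)) ^ 2 - x₁ ^ 2) * ((q + ((0:ℕ):ℝ)) ^ 2 - x₂ ^ 2)) :=
            mul_le_mul_of_nonneg_right hstep ha0nn
        _ = c * ((∏ j ∈ Finset.range n,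
            (((q + γ + ((j+1:ℕ):ℝ)) ^ 2 - x₂ ^ 2) * ((q + ((j+1:ℕ):ℝ)) ^ 2 - x₁ ^ 2))) *
            (((q + γ + ((0:ℕ):ℝ)) ^ 2 - x₂ ^ 2) * ((q + ((0:ℕ):ℝ)) ^ 2 - x₁ ^ 2))) := by
            rw [ha0]; ring
    rw [hL, hR, mul_div_assoc' c N Da, div_le_div_iff₀ hDbpos hDapos]
    calc N * Da ≤ N * (c * Db) := mul_le_mul_of_nonneg_left hprod hNpos.le
      _ = c * N * Db := by ring
  -- take limits
  have hLlim : Tendsto (fun n => Real.GammaSeq (q + γ + x₂) n * Real.GammaSeq (q + γ - x₂) n *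
      (Real.GammaSeq (q + x₁) n * Real.GammaSeq (q - x₁) n)) atTop
      (𝓝 (Real.Gamma (q + γ + x₂) * Real.Gamma (q + γ - x₂) *
        (Real.Gamma (q + x₁) * Real.Gamma (q - x₁)))) :=
    ((Real.GammaSeq_tendsto_Gamma _).mul (Real.GammaSeq_tendsto_Gamma _)).mul
      ((Real.GammaSeq_tendsto_Gamma _).mul (Real.GammaSeq_tendsto_Gamma _))
  have hRlim : Tendsto (fun n => c * (Real.GammaSeq (q + γ + x₁) n *
      Real.GammaSeq (q + γ - x₁) n *
      (Real.GammaSeq (q + x₂) n * Real.GammaSeq (q - x₂) n))) atTop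
      (𝓝 (c * (Real.Gamma (q + γ + x₁) * Real.Gamma (q + γ - x₁) *
        (Real.Gamma (q + x₂) * Real.Gamma (q - x₂))))) :=
    (((Real.GammaSeq_tendsto_Gamma _).mul (Real.GammaSeq_tendsto_Gamma _)).mul
      ((Real.GammaSeq_tendsto_Gamma _).mul (Real.GammaSeq_tendsto_Gamma _))).const_mul c
  have hle := le_of_tendsto_of_tendsto hLlim hRlim (Filter.eventually_atTop.mpr ⟨1, hineq⟩)
  have hRpos : 0 < Real.Gamma (q + γ + x₁) * Real.Gamma (q + γ - x₁) *
      (Real.Gamma (q + x₂) * Real.Gamma (q - x₂)) :=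
    mul_pos (mul_pos (Real.Gamma_pos_of_pos (by linarith)) (Real.Gamma_pos_of_pos (by linarith)))
      (mul_pos (Real.Gamma_pos_of_pos (by linarith)) (Real.Gamma_pos_of_pos (by linarith)))
  calc Real.Gamma (q + γ + x₂) * Real.Gamma (q + γ - x₂) *
        (Real.Gamma (q + x₁) * Real.Gamma (q - x₁))
      ≤ c * (Real.Gamma (q + γ + x₁) * Real.Gamma (q + γ - x₁) *
        (Real.Gamma (q + x₂) * Real.Gamma (q - x₂))) := hle
    _ < Real.Gamma (q + γ + x₁) * Real.Gamma (q + γ - x₁) *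
        (Real.Gamma (q + x₂) * Real.Gamma (q - x₂)) := by nlinarith

theorem stmt2 (n k : ℤ) (hk : 1 ≤ k) (γ : ℝ) (hγ : 0 < γ)
    (hkn : (k : ℝ) < (n : ℝ) / 2 - γ) :
    ∀ a : ℝ, ((n : ℝ) - (k : ℝ) - 2) / 2 ≤ a →
      StrictAntiOn (fun β : ℝ => ThetaI γ a β) (Set.Icc 0 ((k : ℝ) / 2)) := by
  intro a ha β₁ hβ₁ β₂ hβ₂ hlt
  obtain ⟨hβ₁0, hβ₁k⟩ := hβ₁
  obtain ⟨hβ₂0, hβ₂k⟩ := hβ₂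
  set q : ℝ := (1 - γ + a) / 2 with hqdef
  have hx₁ : (0:ℝ) ≤ β₁ / 2 := by linarith
  have h12 : β₁ / 2 < β₂ / 2 := by linarith
  have h2q : β₂ / 2 < q := by
    rw [hqdef]
    linarith
  have hkey := gamma_key hγ hx₁ h12 h2q
  have hB1 : 0 < Real.Gamma (q + β₁ / 2) * Real.Gamma (q - β₁ / 2) :=
    mul_pos (Real.Gamma_pos_of_pos (by linarith)) (Real.Gamma_pos_of_pos (by linarith))
  have hB2 : 0 < Real.Gamma (q + β₂ / 2) * Real.Gamma (q - β₂ / 2) :=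
    mul_pos (Real.Gamma_pos_of_pos (by linarith)) (Real.Gamma_pos_of_pos (by linarith))
  have h4 : (0:ℝ) < (4:ℝ) ^ γ := Real.rpow_pos_of_pos (by norm_num) γ
  simp only [ThetaI]
  rw [show (1 + γ + a + β₂) / 2 = q + γ + β₂ / 2 by rw [hqdef]; ring,
    show (1 + γ + a - β₂) / 2 = q + γ - β₂ / 2 by rw [hqdef]; ring,
    show (1 - γ + a + β₂) / 2 = q + β₂ / 2 by rw [hqdef]; ring,
    show (1 - γ + a - β₂) / 2 = q - β₂ / 2 by rw [hqdef]; ring,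
    show (1 + γ + a + β₁) / 2 = q + γ + β₁ / 2 by rw [hqdef]; ring,
    show (1 + γ + a - β₁) / 2 = q + γ - β₁ / 2 by rw [hqdef]; ring,
    show (1 - γ + a + β₁) / 2 = q + β₁ / 2 by rw [hqdef]; ring,
    show (1 - γ + a - β₁) / 2 = q - β₁ / 2 by rw [hqdef]; ring]
  rw [div_lt_div_iff₀ hB2 hB1]
  calc (4:ℝ) ^ γ * Real.Gamma (q + γ + β₂ / 2) * Real.Gamma (q + γ - β₂ / 2) *
        (Real.Gamma (q + β₁ / 2) * Real.Gamma (q - β₁ / 2))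
      = (4:ℝ) ^ γ * (Real.Gamma (q + γ + β₂ / 2) * Real.Gamma (q + γ - β₂ / 2) *
        (Real.Gamma (q + β₁ / 2) * Real.Gamma (q - β₁ / 2))) := by ring
    _ < (4:ℝ) ^ γ * (Real.Gamma (q + γ + β₁ / 2) * Real.Gamma (q + γ - β₁ / 2) *
        (Real.Gamma (q + β₂ / 2) * Real.Gamma (q - β₂ / 2))) :=
        (mul_lt_mul_iff_right₀ h4).mpr hkey
    _ = (4:ℝ) ^ γ * Real.Gamma (q + γ + β₁ / 2) * Real.Gamma (q + γ - β₁ / 2) *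
        (Real.Gamma (q + β₂ / 2) * Real.Gamma (q - β₂ / 2)) := by ring
end

section
/- Let n ≥ 4 be an integer and let γ be a real number with 0 < γ < n/2 − 1. Then for every integer m ≥ 1 and every real λ ≥ 0, one has T(γ,1, m + (n−3)/2, λ) > ((n+2γ)/(n−2γ)) · Q(n,γ). -/
open MeasureTheory Set

/-- The Fourier symbol at a real argument `b`. -/
noncomputable def ThetaR (γ a b : ℝ) : ℝ :=
  (4 : ℝ) ^ γ * ‖Complex.Gamma (((1 + γ + a) / 2 : ℝ) + (b / 2 : ℝ) * Complex.I)‖ ^ 2 /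
    ‖Complex.Gamma (((1 - γ + a) / 2 : ℝ) + (b / 2 : ℝ) * Complex.I)‖ ^ 2

/-- The eigenvalue `Θ_{m,ℓ}` expressed as a function of the Laplace eigenvalue `λ`. -/
noncomputable def T (γ : ℝ) (k : ℤ) (a lam : ℝ) : ℝ :=
  if lam ≤ (k : ℝ) ^ 2 / 4 then ThetaI γ a (Real.sqrt ((k : ℝ) ^ 2 / 4 - lam))
  else ThetaR γ a (Real.sqrt (lam - (k : ℝ) ^ 2 / 4))

/-- The fractional curvature `Q_γ(n,1)` of the trivial solution on `Sⁿ∖S¹`. -/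
noncomputable def Qcurv (n : ℤ) (γ : ℝ) : ℝ :=
  (4 : ℝ) ^ γ * Real.Gamma (((n : ℝ) + 2 * γ) / 4) * Real.Gamma (((n : ℝ) - 2 + 2 * γ) / 4) /
    (Real.Gamma (((n : ℝ) - 2 * γ) / 4) * Real.Gamma (((n : ℝ) - 2 - 2 * γ) / 4))


noncomputable def Rbeta (γ s : ℝ) : ℝ :=
  ∫ x in Set.Ioo (0:ℝ) 1, x ^ (s - 1) * (1 - x) ^ (γ - 1)

lemma integrand_ofReal {u v : ℝ} {x : ℝ} (hx : 0 ≤ x) (hx1 : x ≤ 1) :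
    (x : ℂ) ^ ((u : ℂ) - 1) * ((1 : ℂ) - x) ^ ((v : ℂ) - 1)
      = ((x ^ (u - 1) * (1 - x) ^ (v - 1) : ℝ) : ℂ) := by
  have h1 : ((u : ℂ) - 1) = ((u - 1 : ℝ) : ℂ) := by push_cast; ring
  have h2 : ((v : ℂ) - 1) = ((v - 1 : ℝ) : ℂ) := by push_cast; ring
  have h3 : ((1 : ℂ) - x) = ((1 - x : ℝ) : ℂ) := by push_cast; ring
  rw [h1, h2, h3, ← Complex.ofReal_cpow hx, ← Complex.ofReal_cpow (by linarith), Complex.ofReal_mul]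

lemma Rbeta_integrableOn {γ s : ℝ} (hγ : 0 < γ) (hs : 0 < s) :
    IntegrableOn (fun x : ℝ => x ^ (s - 1) * (1 - x) ^ (γ - 1)) (Set.Ioo 0 1) := by
  have h := Complex.betaIntegral_convergent (u := (s : ℂ)) (v := (γ : ℂ)) (by simpa) (by simpa)
  rw [intervalIntegrable_iff_integrableOn_Ioc_of_le (by norm_num)] at h
  have h2 : IntegrableOn (fun x : ℝ => ((x:ℂ) ^ ((s:ℂ) - 1) * ((1:ℂ) - x) ^ ((γ:ℂ) - 1)).re)
      (Set.Ioc 0 1) := h.re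
  refine ((h2.mono_set Set.Ioo_subset_Ioc_self).congr_fun (fun x hx => ?_) measurableSet_Ioo)
  beta_reduce; rw [integrand_ofReal hx.1.le hx.2.le, Complex.ofReal_re]

lemma Rbeta_eq_betaIntegral {γ s : ℝ} (hγ : 0 < γ) (hs : 0 < s) :
    Complex.betaIntegral (s : ℂ) (γ : ℂ) = ((Rbeta γ s : ℝ) : ℂ) := by
  rw [Complex.betaIntegral, Rbeta]
  rw [← MeasureTheory.integral_Ioc_eq_integral_Ioo,
    ← intervalIntegral.integral_of_le (by norm_num : (0:ℝ) ≤ 1),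
    ← intervalIntegral.integral_ofReal]
  refine intervalIntegral.integral_congr fun x hx => ?_
  rw [Set.uIcc_of_le (by norm_num : (0:ℝ) ≤ 1)] at hx
  exact integrand_ofReal hx.1 hx.2

lemma Rbeta_eq_Gamma {γ s : ℝ} (hγ : 0 < γ) (hs : 0 < s) :
    Rbeta γ s = Real.Gamma s * Real.Gamma γ / Real.Gamma (s + γ) := by
  have h := Complex.Gamma_mul_Gamma_eq_betaIntegral (s := (s:ℂ)) (t := (γ:ℂ)) (by simpa) (by simpa)
  rw [Rbeta_eq_betaIntegral hγ hs] at h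
  have hG : Complex.Gamma ((s:ℂ) + γ) = ((Real.Gamma (s + γ) : ℝ) : ℂ) := by
    rw [← Complex.ofReal_add, Complex.Gamma_ofReal]
  rw [Complex.Gamma_ofReal, Complex.Gamma_ofReal, hG, ← Complex.ofReal_mul, ← Complex.ofReal_mul]
    at h
  have h' : Real.Gamma s * Real.Gamma γ = Real.Gamma (s + γ) * Rbeta γ s := by exact_mod_cast h
  have hne : Real.Gamma (s + γ) ≠ 0 := (Real.Gamma_pos_of_pos (by linarith)).ne'
  field_simp [hne] at h' ⊢
  linarith [h']

lemma Rbeta_pos {γ s : ℝ} (hγ : 0 < γ) (hs : 0 < s) : 0 < Rbeta γ s := by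
  rw [Rbeta_eq_Gamma hγ hs]
  have := Real.Gamma_pos_of_pos hs
  have := Real.Gamma_pos_of_pos hγ
  have := Real.Gamma_pos_of_pos (show 0 < s + γ by linarith)
  positivity

lemma Rbeta_anti {γ p q : ℝ} (hγ : 0 < γ) (hp : 0 < p) (hpq : p ≤ q) :
    Rbeta γ q ≤ Rbeta γ p := by
  refine MeasureTheory.setIntegral_mono_on (Rbeta_integrableOn hγ (lt_of_lt_of_le hp hpq))
    (Rbeta_integrableOn hγ hp) measurableSet_Ioo (fun x hx => ?_)
  have h1 : x ^ (q - 1) ≤ x ^ (p - 1) :=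
    Real.rpow_le_rpow_of_exponent_ge hx.1 hx.2.le (by linarith)
  have h2 : (0:ℝ) ≤ (1 - x) ^ (γ - 1) := Real.rpow_nonneg (by linarith [hx.2]) _
  exact mul_le_mul_of_nonneg_right h1 h2

lemma Rbeta_succ {γ s : ℝ} (hγ : 0 < γ) (hs : 0 < s) :
    Rbeta γ (s + 1) = s / (s + γ) * Rbeta γ s := by
  rw [Rbeta_eq_Gamma hγ (by linarith), Rbeta_eq_Gamma hγ hs]
  rw [Real.Gamma_add_one hs.ne', show s + 1 + γ = (s + γ) + 1 by ring,
    Real.Gamma_add_one (by positivity)]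
  have h1 : Real.Gamma (s + γ) ≠ 0 := (Real.Gamma_pos_of_pos (by linarith)).ne'
  have h2 : s + γ ≠ 0 := by positivity
  field_simp

lemma Rbeta_logconvex {γ p q a b : ℝ} (hγ : 0 < γ) (hp : 0 < p) (hq : 0 < q)
    (ha : 0 < a) (hb : 0 < b) (hab : a + b = 1) :
    Rbeta γ (a * p + b * q) ≤ Rbeta γ p ^ a * Rbeta γ q ^ b := by
  let f : ℝ → ℝ → ℝ → ℝ := fun c u x => x ^ (c * (u - 1)) * (1 - x) ^ (c * (γ - 1))
  have e : Real.HolderConjugate (1 / a) (1 / b) := Real.holderConjugate_one_div ha hb hab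
  have hpq : 0 < a * p + b * q := by positivity
  have posf : ∀ c u x : ℝ, x ∈ Set.Ioo (0:ℝ) 1 → 0 ≤ f c u x := fun c u x hx =>
    mul_nonneg (Real.rpow_nonneg hx.1.le _) (Real.rpow_nonneg (by linarith [hx.2]) _)
  have posf' : ∀ c u : ℝ, ∀ᵐ x : ℝ ∂volume.restrict (Set.Ioo 0 1), 0 ≤ f c u x := fun c u =>
    (ae_restrict_iff' measurableSet_Ioo).mpr (ae_of_all _ (posf c u))
  have fpow : ∀ {c x : ℝ}, 0 < c → ∀ u : ℝ, x ∈ Set.Ioo (0:ℝ) 1 →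
      x ^ (u - 1) * (1 - x) ^ (γ - 1) = f c u x ^ (1 / c) := by
    intro c x hc u hx
    dsimp only [f]
    rw [Real.mul_rpow (Real.rpow_nonneg hx.1.le _) (Real.rpow_nonneg (by linarith [hx.2]) _),
      ← Real.rpow_mul hx.1.le, ← Real.rpow_mul (by linarith [hx.2])]
    congr 2 <;> field_simp [hc.ne']
  have fmeas : ∀ c u : ℝ, AEStronglyMeasurable (f c u) (volume.restrict (Set.Ioo 0 1)) := by
    intro c u
    refine ContinuousOn.aestronglyMeasurable ?_ measurableSet_Ioo
    refine ContinuousOn.mul (continuousOn_of_forall_continuousAt fun x hx => ?_)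
      (continuousOn_of_forall_continuousAt fun x hx => ?_)
    · exact Real.continuousAt_rpow_const _ _ (Or.inl hx.1.ne')
    · have h1x : (1:ℝ) - x ≠ 0 := sub_ne_zero.mpr hx.2.ne'
      exact (Real.continuousAt_rpow_const _ _ (Or.inl h1x)).comp
        ((continuous_const.sub continuous_id).continuousAt)
  have f_mem_Lp : ∀ {c u : ℝ}, 0 < c → 0 < u →
      MemLp (f c u) (ENNReal.ofReal (1 / c)) (volume.restrict (Set.Ioo 0 1)) := by
    intro c u hc hu
    have A : ENNReal.ofReal (1 / c) ≠ 0 := by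
      rwa [Ne, ENNReal.ofReal_eq_zero, not_le, one_div_pos]
    have B : ENNReal.ofReal (1 / c) ≠ ⊤ := ENNReal.ofReal_ne_top
    rw [← memLp_norm_rpow_iff (fmeas c u) A B, ENNReal.toReal_ofReal (one_div_nonneg.mpr hc.le),
      ENNReal.div_self A B, memLp_one_iff_integrable]
    apply Integrable.congr (Rbeta_integrableOn hγ hu)
    refine Filter.eventuallyEq_of_mem (self_mem_ae_restrict measurableSet_Ioo) fun x hx => ?_
    rw [fpow hc u hx]
    congr 1
    exact (Real.norm_of_nonneg (posf _ _ x hx)).symm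
  rw [Rbeta, Rbeta, Rbeta]
  convert MeasureTheory.integral_mul_le_Lp_mul_Lq_of_nonneg e (posf' a p) (posf' b q)
    (f_mem_Lp ha hp) (f_mem_Lp hb hq) using 1
  · refine setIntegral_congr_fun measurableSet_Ioo fun x hx => ?_
    dsimp only [f]
    have hb' : b = 1 - a := by linarith
    have B1 : x ^ (a * p + b * q - 1) = x ^ (a * (p - 1)) * x ^ (b * (q - 1)) := by
      rw [← Real.rpow_add hx.1, hb']; congr 1; ring
    have B2 : (1 - x) ^ (γ - 1) = (1 - x) ^ (a * (γ - 1)) * (1 - x) ^ (b * (γ - 1)) := by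
      rw [← Real.rpow_add (by linarith [hx.2]), hb']; congr 1; ring
    rw [B1, B2]; ring
  · rw [one_div_one_div, one_div_one_div]
    congr 2 <;> exact setIntegral_congr_fun measurableSet_Ioo fun x hx => fpow (by assumption) _ hx

lemma Rbeta_prod_le {γ B x : ℝ} (hγ : 0 < γ) (hB : 1/4 < B) (hx0 : 0 ≤ x) (hx : x ≤ 1/4) :
    Rbeta γ (B + x) * Rbeta γ (B - x) ≤ Rbeta γ (B + 1/4) * Rbeta γ (B - 1/4) := by
  have hB1 : 0 < B + 1/4 := by linarith
  have hB2 : 0 < B - 1/4 := by linarith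
  have hB0 : 0 < B := by linarith
  have P1 := Rbeta_pos hγ hB1
  have P2 := Rbeta_pos hγ hB2
  have P0 := Rbeta_pos hγ hB0
  have hmid : Rbeta γ B ^ 2 ≤ Rbeta γ (B + 1/4) * Rbeta γ (B - 1/4) := by
    have h := Rbeta_logconvex hγ hB1 hB2 (by norm_num : (0:ℝ) < 1/2) (by norm_num : (0:ℝ) < 1/2)
      (by norm_num)
    rw [show (1/2) * (B + 1/4) + (1/2) * (B - 1/4) = B by ring] at h
    calc Rbeta γ B ^ 2
        ≤ (Rbeta γ (B + 1/4) ^ ((1:ℝ)/2) * Rbeta γ (B - 1/4) ^ ((1:ℝ)/2)) ^ 2 :=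
          pow_le_pow_left₀ P0.le h 2
      _ = Rbeta γ (B + 1/4) * Rbeta γ (B - 1/4) := by
          rw [mul_pow, ← Real.rpow_natCast (Rbeta γ (B + 1/4) ^ ((1:ℝ)/2)) 2,
            ← Real.rpow_natCast (Rbeta γ (B - 1/4) ^ ((1:ℝ)/2)) 2,
            ← Real.rpow_mul P1.le, ← Real.rpow_mul P2.le]
          norm_num
  rcases eq_or_lt_of_le hx0 with h0 | h0
  · rw [← h0, add_zero, sub_zero, ← pow_two]
    exact hmid
  rcases eq_or_lt_of_le hx with h1 | h1
  · rw [h1]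
  have hθ : 0 < 4 * x := by linarith
  have hθ1 : 0 < 1 - 4 * x := by linarith
  have hA := Rbeta_logconvex hγ hB1 hB0 hθ hθ1 (by ring)
  rw [show 4 * x * (B + 1/4) + (1 - 4 * x) * B = B + x by ring] at hA
  have hC := Rbeta_logconvex hγ hB2 hB0 hθ hθ1 (by ring)
  rw [show 4 * x * (B - 1/4) + (1 - 4 * x) * B = B - x by ring] at hC
  have hBx : 0 < B - x := by linarith
  have PA := Rbeta_pos hγ (show (0:ℝ) < B + x by linarith)
  calc Rbeta γ (B + x) * Rbeta γ (B - x)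
      ≤ (Rbeta γ (B + 1/4) ^ (4 * x) * Rbeta γ B ^ (1 - 4 * x)) *
        (Rbeta γ (B - 1/4) ^ (4 * x) * Rbeta γ B ^ (1 - 4 * x)) :=
        mul_le_mul hA hC (Rbeta_pos hγ hBx).le (by positivity)
    _ = (Rbeta γ (B + 1/4) * Rbeta γ (B - 1/4)) ^ (4 * x) * (Rbeta γ B ^ 2) ^ (1 - 4 * x) := by
        rw [Real.mul_rpow P1.le P2.le, ← Real.rpow_natCast (Rbeta γ B) 2,
          ← Real.rpow_mul P0.le,
          show ((2:ℕ):ℝ) * (1 - 4 * x) = (1 - 4 * x) + (1 - 4 * x) by push_cast; ring,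
          Real.rpow_add P0]
        ring
    _ ≤ (Rbeta γ (B + 1/4) * Rbeta γ (B - 1/4)) ^ (4 * x) *
        (Rbeta γ (B + 1/4) * Rbeta γ (B - 1/4)) ^ (1 - 4 * x) := by
        refine mul_le_mul_of_nonneg_left ?_ (Real.rpow_nonneg (by positivity) _)
        exact Real.rpow_le_rpow (sq_nonneg _) hmid hθ1.le
    _ = Rbeta γ (B + 1/4) * Rbeta γ (B - 1/4) := by
        rw [← Real.rpow_add (by positivity)]
        norm_num

lemma norm_betaIntegral_le {γ B t : ℝ} (hγ : 0 < γ) (hB : 0 < B) :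
    ‖Complex.betaIntegral ((B : ℂ) + t * Complex.I) γ‖ ≤ Rbeta γ B := by
  rw [Complex.betaIntegral]
  refine le_trans (intervalIntegral.norm_integral_le_integral_norm (by norm_num)) ?_
  rw [intervalIntegral.integral_of_le (by norm_num : (0:ℝ) ≤ 1),
    MeasureTheory.integral_Ioc_eq_integral_Ioo, Rbeta]
  refine le_of_eq (setIntegral_congr_fun measurableSet_Ioo fun x hx => ?_)
  have h1x : (0:ℝ) < 1 - x := by linarith [hx.2]
  rw [norm_mul,
    show (1:ℂ) - (x:ℝ) = ((1 - x : ℝ) : ℂ) by push_cast; ring,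
    Complex.norm_cpow_eq_rpow_re_of_pos hx.1, Complex.norm_cpow_eq_rpow_re_of_pos h1x]
  congr 2 <;> simp

lemma thetaI_eq {γ a β : ℝ} (hγ : 0 < γ) (hβ : 0 ≤ β) (hB : 0 < (1 - γ + a) / 2 - β / 2) :
    ThetaI γ a β = (4:ℝ) ^ γ * Real.Gamma γ ^ 2 /
      (Rbeta γ ((1 - γ + a) / 2 + β / 2) * Rbeta γ ((1 - γ + a) / 2 - β / 2)) := by
  have hs2 : 0 < (1 - γ + a) / 2 - β / 2 := hB
  have hs1 : 0 < (1 - γ + a) / 2 + β / 2 := by linarith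
  have e1 : (1 + γ + a + β) / 2 = ((1 - γ + a) / 2 + β / 2) + γ := by ring
  have e2 : (1 + γ + a - β) / 2 = ((1 - γ + a) / 2 - β / 2) + γ := by ring
  have e3 : (1 - γ + a + β) / 2 = (1 - γ + a) / 2 + β / 2 := by ring
  have e4 : (1 - γ + a - β) / 2 = (1 - γ + a) / 2 - β / 2 := by ring
  have hR1 := Rbeta_eq_Gamma hγ hs1
  have hR2 := Rbeta_eq_Gamma hγ hs2
  have hG1 : Real.Gamma ((1 - γ + a) / 2 + β / 2) ≠ 0 := (Real.Gamma_pos_of_pos hs1).ne'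
  have hG2 : Real.Gamma ((1 - γ + a) / 2 - β / 2) ≠ 0 := (Real.Gamma_pos_of_pos hs2).ne'
  have hP1 : Rbeta γ ((1 - γ + a) / 2 + β / 2) ≠ 0 := (Rbeta_pos hγ hs1).ne'
  have hP2 : Rbeta γ ((1 - γ + a) / 2 - β / 2) ≠ 0 := (Rbeta_pos hγ hs2).ne'
  have g1 : Real.Gamma (((1 - γ + a) / 2 + β / 2) + γ)
      = Real.Gamma ((1 - γ + a) / 2 + β / 2) * Real.Gamma γ / Rbeta γ ((1 - γ + a) / 2 + β / 2) := by
    rw [hR1, div_div_cancel₀ (mul_ne_zero hG1 (Real.Gamma_pos_of_pos hγ).ne')]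
  have g2 : Real.Gamma (((1 - γ + a) / 2 - β / 2) + γ)
      = Real.Gamma ((1 - γ + a) / 2 - β / 2) * Real.Gamma γ / Rbeta γ ((1 - γ + a) / 2 - β / 2) := by
    rw [hR2, div_div_cancel₀ (mul_ne_zero hG2 (Real.Gamma_pos_of_pos hγ).ne')]
  rw [ThetaI, e1, e2, e3, e4, g1, g2]
  have key : ∀ u1 u2 r1 r2 gg c : ℝ, u1 ≠ 0 → u2 ≠ 0 → r1 ≠ 0 → r2 ≠ 0 →
      c * (u1 * gg / r1) * (u2 * gg / r2) / (u1 * u2) = c * gg ^ 2 / (r1 * r2) := by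
    intros u1 u2 r1 r2 gg c h1 h2 h3 h4
    field_simp
  exact key _ _ _ _ _ _ hG1 hG2 hP1 hP2

lemma thetaR_ge {γ a b : ℝ} (hγ : 0 < γ) (hB : 0 < (1 - γ + a) / 2) :
    (4:ℝ) ^ γ * Real.Gamma γ ^ 2 / Rbeta γ ((1 - γ + a) / 2) ^ 2 ≤ ThetaR γ a b := by
  have hg : 0 < Real.Gamma γ := Real.Gamma_pos_of_pos hγ
  rw [ThetaR]
  set B : ℝ := (1 - γ + a) / 2 with hBdef
  set t : ℝ := b / 2 with ht
  set u : ℂ := (B : ℂ) + (t : ℝ) * Complex.I with hu_def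
  have hu : 0 < u.re := by rw [hu_def]; simpa using hB
  have hid := Complex.Gamma_mul_Gamma_eq_betaIntegral (s := u) (t := (γ : ℂ)) hu (by simpa)
  have hsum : u + (γ : ℂ) = (((1 + γ + a) / 2 : ℝ) : ℂ) + ((t : ℝ) : ℂ) * Complex.I := by
    rw [hu_def, hBdef]; push_cast; ring
  rw [hsum] at hid
  have hnorm := congrArg norm hid
  rw [norm_mul, norm_mul] at hnorm
  have hgn : ‖Complex.Gamma (γ : ℂ)‖ = Real.Gamma γ := by
    rw [Complex.Gamma_ofReal, Complex.norm_real, Real.norm_of_nonneg hg.le]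
  rw [hgn] at hnorm
  set GB := ‖Complex.Gamma u‖ with hGB
  set GA := ‖Complex.Gamma ((((1 + γ + a) / 2 : ℝ) : ℂ) + ((t : ℝ) : ℂ) * Complex.I)‖ with hGA
  set nb := ‖Complex.betaIntegral u (γ : ℂ)‖ with hnb
  have hGBpos : 0 < GB := norm_pos_iff.mpr (Complex.Gamma_ne_zero_of_re_pos hu)
  have hnbpos : 0 < nb := by
    rcases (norm_nonneg (Complex.betaIntegral u (γ : ℂ))).lt_or_eq with h | h
    · exact h
    · exfalso
      rw [hnb, ← h, mul_zero] at hnorm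
      nlinarith
  have hnble : nb ≤ Rbeta γ B := norm_betaIntegral_le hγ hB
  have hRpos : 0 < Rbeta γ B := Rbeta_pos hγ hB
  have hGAeq : GA = GB * Real.Gamma γ / nb := by
    field_simp
    linarith [hnorm]
  have : (4:ℝ) ^ γ * GA ^ 2 / GB ^ 2 = (4:ℝ) ^ γ * Real.Gamma γ ^ 2 / nb ^ 2 := by
    rw [hGAeq]; field_simp
  rw [this]
  exact div_le_div_of_nonneg_left (by positivity) (by positivity) (by nlinarith)

set_option maxHeartbeats 1600000 in
theorem stmt7 (n : ℤ) (hn : 4 ≤ n) (γ : ℝ) (hγ : 0 < γ) (hγn : γ < (n : ℝ) / 2 - 1) :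
    ∀ m : ℤ, 1 ≤ m → ∀ lam : ℝ, 0 ≤ lam →
      (((n : ℝ) + 2 * γ) / ((n : ℝ) - 2 * γ)) * Qcurv n γ <
        T γ 1 ((m : ℝ) + ((n : ℝ) - 3) / 2) lam := by
  intro m hm lam hlam
  have hn' : (4:ℝ) ≤ (n:ℝ) := by exact_mod_cast hn
  have hm' : (1:ℝ) ≤ (m:ℝ) := by exact_mod_cast hm
  have hγ2 : 2 * γ < (n:ℝ) - 2 := by linarith
  have hg : 0 < Real.Gamma γ := Real.Gamma_pos_of_pos hγ
  have hs1pos : 0 < ((n:ℝ) - 2 * γ) / 4 := by linarith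
  have hs2pos : 0 < ((n:ℝ) - 2 - 2 * γ) / 4 := by linarith
  have hK1 : 0 < Rbeta γ (((n:ℝ) - 2 * γ) / 4) := Rbeta_pos hγ hs1pos
  have hK2 : 0 < Rbeta γ (((n:ℝ) - 2 - 2 * γ) / 4) := Rbeta_pos hγ hs2pos
  set a : ℝ := (m:ℝ) + ((n:ℝ) - 3) / 2 with ha
  have hBgt : 3/4 < (1 - γ + a) / 2 := by rw [ha]; linarith
  -- rewrite Qcurv in terms of Rbeta
  have hQ : Qcurv n γ = (4:ℝ) ^ γ * Real.Gamma γ ^ 2 /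
      (Rbeta γ (((n:ℝ) - 2 * γ) / 4) * Rbeta γ (((n:ℝ) - 2 - 2 * γ) / 4)) := by
    have hR1 := Rbeta_eq_Gamma hγ hs1pos
    have hR2 := Rbeta_eq_Gamma hγ hs2pos
    have e1 : ((n:ℝ) + 2 * γ) / 4 = ((n:ℝ) - 2 * γ) / 4 + γ := by ring
    have e2 : ((n:ℝ) - 2 + 2 * γ) / 4 = ((n:ℝ) - 2 - 2 * γ) / 4 + γ := by ring
    have hG1 : Real.Gamma (((n:ℝ) - 2 * γ) / 4) ≠ 0 := (Real.Gamma_pos_of_pos hs1pos).ne'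
    have hG2 : Real.Gamma (((n:ℝ) - 2 - 2 * γ) / 4) ≠ 0 := (Real.Gamma_pos_of_pos hs2pos).ne'
    have g1 : Real.Gamma (((n:ℝ) - 2 * γ) / 4 + γ)
        = Real.Gamma (((n:ℝ) - 2 * γ) / 4) * Real.Gamma γ / Rbeta γ (((n:ℝ) - 2 * γ) / 4) := by
      rw [hR1, div_div_cancel₀ (mul_ne_zero hG1 hg.ne')]
    have g2 : Real.Gamma (((n:ℝ) - 2 - 2 * γ) / 4 + γ)
        = Real.Gamma (((n:ℝ) - 2 - 2 * γ) / 4) * Real.Gamma γ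
          / Rbeta γ (((n:ℝ) - 2 - 2 * γ) / 4) := by
      rw [hR2, div_div_cancel₀ (mul_ne_zero hG2 hg.ne')]
    have key : ∀ u1 u2 r1 r2 gg c : ℝ, u1 ≠ 0 → u2 ≠ 0 → r1 ≠ 0 → r2 ≠ 0 →
        c * (u1 * gg / r1) * (u2 * gg / r2) / (u1 * u2) = c * gg ^ 2 / (r1 * r2) := by
      intros u1 u2 r1 r2 gg c h1 h2 h3 h4
      field_simp
    rw [Qcurv, e1, e2, g1, g2]
    exact key _ _ _ _ _ _ hG1 hG2 hK1.ne' hK2.ne'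
  -- the key comparison for the shifted beta products
  have hDK : Rbeta γ ((1 - γ + a) / 2 + 1/4) * Rbeta γ ((1 - γ + a) / 2 - 1/4)
      < (((n:ℝ) - 2 * γ) / ((n:ℝ) + 2 * γ)) *
        (Rbeta γ (((n:ℝ) - 2 * γ) / 4) * Rbeta γ (((n:ℝ) - 2 - 2 * γ) / 4)) := by
    have h1 : Rbeta γ ((1 - γ + a) / 2 + 1/4) ≤ Rbeta γ (((n:ℝ) - 2 - 2 * γ) / 4 + 1) := by
      refine Rbeta_anti hγ (by linarith) ?_
      rw [ha]; linarith
    have h2 : Rbeta γ ((1 - γ + a) / 2 - 1/4) ≤ Rbeta γ (((n:ℝ) - 2 * γ) / 4) := by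
      refine Rbeta_anti hγ hs1pos ?_
      rw [ha]; linarith
    have hsucc := Rbeta_succ hγ hs2pos
    have hPpos2 : 0 < Rbeta γ ((1 - γ + a) / 2 - 1/4) := Rbeta_pos hγ (by linarith)
    have hratio : (((n:ℝ) - 2 - 2 * γ) / 4) / ((((n:ℝ) - 2 - 2 * γ) / 4) + γ)
        < ((n:ℝ) - 2 * γ) / ((n:ℝ) + 2 * γ) := by
      rw [div_lt_div_iff₀ (by linarith) (by linarith)]
      nlinarith
    calc Rbeta γ ((1 - γ + a) / 2 + 1/4) * Rbeta γ ((1 - γ + a) / 2 - 1/4)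
        ≤ Rbeta γ (((n:ℝ) - 2 - 2 * γ) / 4 + 1) * Rbeta γ (((n:ℝ) - 2 * γ) / 4) :=
          mul_le_mul h1 h2 hPpos2.le (Rbeta_pos hγ (by linarith)).le
      _ = ((((n:ℝ) - 2 - 2 * γ) / 4) / ((((n:ℝ) - 2 - 2 * γ) / 4) + γ)) *
          (Rbeta γ (((n:ℝ) - 2 * γ) / 4) * Rbeta γ (((n:ℝ) - 2 - 2 * γ) / 4)) := by
          rw [hsucc]; ring
      _ < _ := by
          exact mul_lt_mul_of_pos_right hratio (by positivity)
  -- generic final arithmetic step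
  have final : ∀ D : ℝ, 0 < D →
      D < (((n:ℝ) - 2 * γ) / ((n:ℝ) + 2 * γ)) *
        (Rbeta γ (((n:ℝ) - 2 * γ) / 4) * Rbeta γ (((n:ℝ) - 2 - 2 * γ) / 4)) →
      (((n:ℝ) + 2 * γ) / ((n:ℝ) - 2 * γ)) * ((4:ℝ) ^ γ * Real.Gamma γ ^ 2 /
        (Rbeta γ (((n:ℝ) - 2 * γ) / 4) * Rbeta γ (((n:ℝ) - 2 - 2 * γ) / 4)))
        < (4:ℝ) ^ γ * Real.Gamma γ ^ 2 / D := by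
    intro D hD hDlt
    have hNpos : 0 < (4:ℝ) ^ γ * Real.Gamma γ ^ 2 := by positivity
    have hp : 0 < (n:ℝ) + 2 * γ := by linarith
    have hq : 0 < (n:ℝ) - 2 * γ := by linarith
    have h1 : D * ((n:ℝ) + 2 * γ) < ((n:ℝ) - 2 * γ) *
        (Rbeta γ (((n:ℝ) - 2 * γ) / 4) * Rbeta γ (((n:ℝ) - 2 - 2 * γ) / 4)) := by
      calc D * ((n:ℝ) + 2 * γ)
          < (((n:ℝ) - 2 * γ) / ((n:ℝ) + 2 * γ) *
            (Rbeta γ (((n:ℝ) - 2 * γ) / 4) * Rbeta γ (((n:ℝ) - 2 - 2 * γ) / 4))) *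
            ((n:ℝ) + 2 * γ) := mul_lt_mul_of_pos_right hDlt hp
        _ = ((n:ℝ) - 2 * γ) *
            (Rbeta γ (((n:ℝ) - 2 * γ) / 4) * Rbeta γ (((n:ℝ) - 2 - 2 * γ) / 4)) := by
            field_simp
    rw [div_mul_div_comm, div_lt_div_iff₀ (by positivity) hD]
    nlinarith [mul_lt_mul_of_pos_left h1 hNpos]
  -- unfold T and split on the two regimes
  have hk : (((1:ℤ) : ℝ)) ^ 2 / 4 = 1/4 := by norm_num
  simp only [T, hk]
  split_ifs with h
  · -- imaginary case
    have hβ0 : 0 ≤ Real.sqrt (1/4 - lam) := Real.sqrt_nonneg _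
    have hβle : Real.sqrt (1/4 - lam) ≤ 1/2 := by
      have h14 : 1/4 - lam ≤ (1/2 : ℝ) ^ 2 := by norm_num; linarith
      calc Real.sqrt (1/4 - lam) ≤ Real.sqrt ((1/2 : ℝ) ^ 2) := Real.sqrt_le_sqrt h14
        _ = 1/2 := Real.sqrt_sq (by norm_num)
    rw [thetaI_eq hγ hβ0 (by linarith : 0 < (1 - γ + a) / 2 - Real.sqrt (1/4 - lam) / 2), hQ]
    have hprod : Rbeta γ ((1 - γ + a) / 2 + Real.sqrt (1/4 - lam) / 2) *
        Rbeta γ ((1 - γ + a) / 2 - Real.sqrt (1/4 - lam) / 2)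
        ≤ Rbeta γ ((1 - γ + a) / 2 + 1/4) * Rbeta γ ((1 - γ + a) / 2 - 1/4) :=
      Rbeta_prod_le hγ (by linarith) (by linarith) (by linarith)
    have hDpos : 0 < Rbeta γ ((1 - γ + a) / 2 + Real.sqrt (1/4 - lam) / 2) *
        Rbeta γ ((1 - γ + a) / 2 - Real.sqrt (1/4 - lam) / 2) :=
      mul_pos (Rbeta_pos hγ (by linarith)) (Rbeta_pos hγ (by linarith))
    exact final _ hDpos (lt_of_le_of_lt hprod hDK)
  · -- real case
    refine lt_of_lt_of_le ?_ (thetaR_ge hγ (by linarith : 0 < (1 - γ + a) / 2))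
    rw [hQ]
    have hD2 : Rbeta γ ((1 - γ + a) / 2) ^ 2
        ≤ Rbeta γ ((1 - γ + a) / 2 + 1/4) * Rbeta γ ((1 - γ + a) / 2 - 1/4) := by
      have h0 := Rbeta_prod_le (γ := γ) (B := (1 - γ + a) / 2) (x := 0) hγ
        (by linarith) le_rfl (by norm_num)
      rw [add_zero, sub_zero] at h0
      rw [pow_two]
      exact h0
    exact final _ (pow_pos (Rbeta_pos hγ (by linarith)) 2) (lt_of_le_of_lt hD2 hDK)
end

section
/- Let n, k be integers with k ≥ 1, and let γ be a real number with 0 < γ and k < n/2 − γ; set a₀ = (n−k−2)/2. Then for every real a ≥ a₀, the function λ ↦ T(γ,k,a,λ) is strictly increasing on the interval [0, ∞). -/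
set_option maxHeartbeats 1000000




open Filter Topology Finset

noncomputable def pFun (c d s : ℝ) (n : ℕ) : ℝ :=
  ∏ j ∈ Finset.range (n + 1), (((d / 2 + j) ^ 2 + s) / ((c / 2 + j) ^ 2 + s))

lemma ratio_aux {K : Type*} [Field K] (A1 A2 A3 A4 F P1 P2 P3 P4 : K) (hF : F ≠ 0)
    (h1 : P1 ≠ 0) (h2 : P2 ≠ 0) (h3 : P3 ≠ 0) (h4 : P4 ≠ 0) (hA3 : A3 ≠ 0) (hA4 : A4 ≠ 0) :
    A1 * F / P1 * (A2 * F / P2) / (A3 * F / P3 * (A4 * F / P4)) =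
      A1 * A2 / (A3 * A4) * (P3 * P4 / (P1 * P2)) := by
  field_simp

lemma gamma_ne_zero_aux (x y : ℝ) (hx : 0 < x) :
    Complex.Gamma ((x : ℂ) + (y : ℝ) * Complex.I) ≠ 0 := by
  apply Complex.Gamma_ne_zero
  intro m h
  have := congrArg Complex.re h
  simp at this
  have : (0:ℝ) ≤ m := Nat.cast_nonneg m
  linarith

lemma conj_aux (x y : ℝ) :
    (starRingEnd ℂ) ((x : ℂ) + (y : ℝ) * Complex.I) = (x : ℂ) + ((-y : ℝ) : ℂ) * Complex.I := by
  simp [map_add, map_mul, Complex.conj_ofReal, Complex.conj_I]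

lemma tendsto_I (c d β : ℝ) (hβ : 0 ≤ β) (hβd : β < d) (hdc : d < c) :
    Tendsto (fun n : ℕ => (n : ℝ) ^ (c - d) * pFun c d (-(β ^ 2) / 4) n) atTop
      (𝓝 (Real.Gamma ((c + β) / 2) * Real.Gamma ((c - β) / 2) /
          (Real.Gamma ((d + β) / 2) * Real.Gamma ((d - β) / 2)))) := by
  have hu1 : 0 < (c + β) / 2 := by linarith
  have hu2 : 0 < (c - β) / 2 := by linarith
  have hu3 : 0 < (d + β) / 2 := by linarith
  have hu4 : 0 < (d - β) / 2 := by linarith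
  have hg3 := Real.Gamma_pos_of_pos hu3
  have hg4 := Real.Gamma_pos_of_pos hu4
  have hlim := ((Real.GammaSeq_tendsto_Gamma ((c + β) / 2)).mul
      (Real.GammaSeq_tendsto_Gamma ((c - β) / 2))).div
      ((Real.GammaSeq_tendsto_Gamma ((d + β) / 2)).mul
      (Real.GammaSeq_tendsto_Gamma ((d - β) / 2))) (mul_pos hg3 hg4).ne'
  refine Tendsto.congr' ?_ hlim
  filter_upwards [eventually_ge_atTop 1] with n hn
  have hN : (0 : ℝ) < n := by exact_mod_cast hn
  have hP : ∀ u : ℝ, 0 < u → (0:ℝ) < ∏ j ∈ Finset.range (n + 1), (u + (j:ℝ)) := by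
    intro u hu
    exact Finset.prod_pos fun j _ => by positivity
  have hP1 := hP _ hu1; have hP2 := hP _ hu2; have hP3 := hP _ hu3; have hP4 := hP _ hu4
  have hF : (0:ℝ) < (n.factorial : ℝ) := by positivity
  have hprod : pFun c d (-(β ^ 2) / 4) n =
      ((∏ j ∈ Finset.range (n + 1), ((d + β) / 2 + (j:ℝ))) *
        ∏ j ∈ Finset.range (n + 1), ((d - β) / 2 + (j:ℝ))) /
      ((∏ j ∈ Finset.range (n + 1), ((c + β) / 2 + (j:ℝ))) *
        ∏ j ∈ Finset.range (n + 1), ((c - β) / 2 + (j:ℝ))) := by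
    rw [pFun, ← Finset.prod_mul_distrib, ← Finset.prod_mul_distrib, ← Finset.prod_div_distrib]
    refine Finset.prod_congr rfl fun j _ => ?_
    congr 1 <;> ring
  have hNpow : (n : ℝ) ^ (c - d) =
      (n : ℝ) ^ ((c + β) / 2) * (n : ℝ) ^ ((c - β) / 2) /
      ((n : ℝ) ^ ((d + β) / 2) * (n : ℝ) ^ ((d - β) / 2)) := by
    rw [← Real.rpow_add hN, ← Real.rpow_add hN, ← Real.rpow_sub hN]
    congr 1; ring
  simp only [Real.GammaSeq, Pi.div_apply, Pi.mul_apply]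
  rw [hprod, hNpow]
  exact ratio_aux _ _ _ _ _ _ _ _ _ hF.ne' hP1.ne' hP2.ne' hP3.ne' hP4.ne'
    (Real.rpow_pos_of_pos hN _).ne' (Real.rpow_pos_of_pos hN _).ne'

lemma tendsto_R (c d b : ℝ) (hd : 0 < d) (hdc : d < c) :
    Tendsto (fun n : ℕ => (n : ℝ) ^ (c - d) * pFun c d (b ^ 2 / 4) n) atTop
      (𝓝 (‖Complex.Gamma ((c / 2 : ℝ) + (b / 2 : ℝ) * Complex.I)‖ ^ 2 /
          ‖Complex.Gamma ((d / 2 : ℝ) + (b / 2 : ℝ) * Complex.I)‖ ^ 2)) := by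
  set zc : ℂ := ((c / 2 : ℝ) : ℂ) + ((b / 2 : ℝ) : ℂ) * Complex.I with hzc
  set zd : ℂ := ((d / 2 : ℝ) : ℂ) + ((b / 2 : ℝ) : ℂ) * Complex.I with hzd
  have hc2 : (0:ℝ) < c / 2 := by linarith
  have hd2 : (0:ℝ) < d / 2 := by linarith
  have hne_c : Complex.Gamma zc ≠ 0 := gamma_ne_zero_aux _ _ hc2
  have hne_d : Complex.Gamma zd ≠ 0 := gamma_ne_zero_aux _ _ hd2
  have hconj_c : (starRingEnd ℂ) zc = ((c / 2 : ℝ) : ℂ) + ((-(b/2) : ℝ) : ℂ) * Complex.I :=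
    conj_aux _ _
  have hconj_d : (starRingEnd ℂ) zd = ((d / 2 : ℝ) : ℂ) + ((-(b/2) : ℝ) : ℂ) * Complex.I :=
    conj_aux _ _
  have hne_cc : Complex.Gamma ((starRingEnd ℂ) zc) ≠ 0 := by
    rw [hconj_c]; exact gamma_ne_zero_aux _ _ hc2
  have hne_dc : Complex.Gamma ((starRingEnd ℂ) zd) ≠ 0 := by
    rw [hconj_d]; exact gamma_ne_zero_aux _ _ hd2
  have hlim := ((Complex.GammaSeq_tendsto_Gamma zc).mul
      (Complex.GammaSeq_tendsto_Gamma ((starRingEnd ℂ) zc))).div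
      ((Complex.GammaSeq_tendsto_Gamma zd).mul
      (Complex.GammaSeq_tendsto_Gamma ((starRingEnd ℂ) zd)))
      (mul_ne_zero hne_d hne_dc)
  -- identify the limit value with the real expression
  have hval : Complex.Gamma zc * Complex.Gamma ((starRingEnd ℂ) zc) /
      (Complex.Gamma zd * Complex.Gamma ((starRingEnd ℂ) zd)) =
      ((‖Complex.Gamma zc‖ ^ 2 / ‖Complex.Gamma zd‖ ^ 2 : ℝ) : ℂ) := by
    rw [Complex.Gamma_conj, Complex.Gamma_conj, Complex.mul_conj, Complex.mul_conj,
      Complex.normSq_eq_norm_sq, Complex.normSq_eq_norm_sq, Complex.ofReal_div]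
  rw [hval] at hlim
  -- eventual equality with (real sequence coerced to ℂ)
  have hev : (fun n : ℕ => (((n : ℝ) ^ (c - d) * pFun c d (b ^ 2 / 4) n : ℝ) : ℂ)) =ᶠ[atTop]
      (fun n : ℕ => Complex.GammaSeq zc n * Complex.GammaSeq ((starRingEnd ℂ) zc) n /
        (Complex.GammaSeq zd n * Complex.GammaSeq ((starRingEnd ℂ) zd) n)) := by
    filter_upwards [eventually_ge_atTop 1] with n hn
    have hN : (0 : ℝ) < n := by exact_mod_cast hn
    have hNC : ((n : ℕ) : ℂ) ≠ 0 := by exact_mod_cast hN.ne'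
    have hPne : ∀ z : ℂ, 0 < z.re → (∏ j ∈ Finset.range (n + 1), (z + (j:ℕ))) ≠ 0 := by
      intro z hz
      refine Finset.prod_ne_zero_iff.mpr fun j _ => ?_
      intro h
      have := congrArg Complex.re h
      simp at this
      have : (0:ℝ) ≤ (j:ℝ) := Nat.cast_nonneg j
      linarith
    have hre_c : zc.re = c / 2 := by simp [hzc]
    have hre_d : zd.re = d / 2 := by simp [hzd]
    have hre_cc : ((starRingEnd ℂ) zc).re = c / 2 := by rw [hconj_c]; simp
    have hre_dc : ((starRingEnd ℂ) zd).re = d / 2 := by rw [hconj_d]; simp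
    simp only [Complex.GammaSeq]
    rw [ratio_aux _ _ _ _ _ _ _ _ _ (by exact_mod_cast Nat.factorial_ne_zero n)
      (hPne _ (by rw [hre_c]; exact hc2)) (hPne _ (by rw [hre_cc]; exact hc2))
      (hPne _ (by rw [hre_d]; exact hd2)) (hPne _ (by rw [hre_dc]; exact hd2))
      (by simp [Complex.cpow_eq_zero_iff, hNC])
      (by simp [Complex.cpow_eq_zero_iff, hNC])]
    -- A part
    have hA : ((n:ℂ)) ^ zc * ((n:ℂ)) ^ ((starRingEnd ℂ) zc) /
        (((n:ℂ)) ^ zd * ((n:ℂ)) ^ ((starRingEnd ℂ) zd)) = (((n:ℝ) ^ (c - d) : ℝ) : ℂ) := by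
      rw [← Complex.cpow_add _ _ hNC, ← Complex.cpow_add _ _ hNC, ← Complex.cpow_sub _ _ hNC,
        Complex.add_conj, Complex.add_conj, hre_c, hre_d]
      rw [Complex.ofReal_cpow (le_of_lt hN)]
      norm_num
      congr 1
      push_cast
      ring
    -- P part
    have hprodP : ∀ x : ℝ, 0 < x →
        (∏ j ∈ Finset.range (n + 1), ((((x:ℂ) + ((b/2 : ℝ):ℂ) * Complex.I)) + (j:ℕ))) *
        (∏ j ∈ Finset.range (n + 1), ((((x:ℂ) + ((-(b/2) : ℝ):ℂ) * Complex.I)) + (j:ℕ))) =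
        ((∏ j ∈ Finset.range (n + 1), ((x + (j:ℝ)) ^ 2 + (b/2)^2) : ℝ) : ℂ) := by
      intro x hx
      rw [← Finset.prod_mul_distrib, Complex.ofReal_prod]
      refine Finset.prod_congr rfl fun j _ => ?_
      push_cast
      ring_nf
      rw [Complex.I_sq]
      ring
    have hP : (∏ j ∈ Finset.range (n + 1), (zd + (j:ℕ))) *
        (∏ j ∈ Finset.range (n + 1), ((starRingEnd ℂ) zd + (j:ℕ))) /
        ((∏ j ∈ Finset.range (n + 1), (zc + (j:ℕ))) *
        (∏ j ∈ Finset.range (n + 1), ((starRingEnd ℂ) zc + (j:ℕ)))) =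
        ((pFun c d (b ^ 2 / 4) n : ℝ) : ℂ) := by
      rw [hconj_c, hconj_d, hzc, hzd, hprodP _ hd2, hprodP _ hc2, ← Complex.ofReal_div, pFun,
        ← Finset.prod_div_distrib]
      norm_cast
      refine Finset.prod_congr rfl fun j _ => ?_
      congr 1 <;> ring
    rw [hA, hP, ← Complex.ofReal_mul]
  have hlim2 : Tendsto (fun n : ℕ => (((n : ℝ) ^ (c - d) * pFun c d (b ^ 2 / 4) n : ℝ) : ℂ))
      atTop (𝓝 ((‖Complex.Gamma zc‖ ^ 2 / ‖Complex.Gamma zd‖ ^ 2 : ℝ) : ℂ)) :=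
    Tendsto.congr' hev.symm hlim
  have h3 := (Complex.continuous_re.tendsto _).comp hlim2
  simpa only [Function.comp_def, Complex.ofReal_re] using h3

lemma lim_lt (t c d s1 s2 : ℝ) (hd : 0 < d) (hdc : d < c) (hs1 : -(d / 2) ^ 2 < s1)
    (hs12 : s1 < s2) (L1 L2 : ℝ) (hL2 : 0 < L2)
    (h1 : Tendsto (fun n : ℕ => (n : ℝ) ^ t * pFun c d s1 n) atTop (𝓝 L1))
    (h2 : Tendsto (fun n : ℕ => (n : ℝ) ^ t * pFun c d s2 n) atTop (𝓝 L2)) :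
    L1 < L2 := by
  have hs2 : -(d / 2) ^ 2 < s2 := hs1.trans hs12
  set g : ℝ → ℕ → ℝ := fun s j => ((d / 2 + j) ^ 2 + s) / ((c / 2 + j) ^ 2 + s) with hg
  have hDpos : ∀ s, -(d / 2) ^ 2 < s → ∀ j : ℕ, 0 < (d / 2 + (j:ℝ)) ^ 2 + s := by
    intro s hs j
    have hj : (0:ℝ) ≤ j := Nat.cast_nonneg j
    nlinarith
  have hCpos : ∀ s, -(d / 2) ^ 2 < s → ∀ j : ℕ, 0 < (c / 2 + (j:ℝ)) ^ 2 + s := by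
    intro s hs j
    have hj : (0:ℝ) ≤ j := Nat.cast_nonneg j
    nlinarith
  have hgpos : ∀ s, -(d / 2) ^ 2 < s → ∀ j : ℕ, 0 < g s j := fun s hs j =>
    div_pos (hDpos s hs j) (hCpos s hs j)
  have hgmono : ∀ j : ℕ, g s1 j < g s2 j := by
    intro j
    rw [hg]
    rw [div_lt_div_iff₀ (hCpos s1 hs1 j) (hCpos s2 hs2 j)]
    have hj : (0:ℝ) ≤ j := Nat.cast_nonneg j
    have hCD : (d / 2 + (j:ℝ)) ^ 2 < (c / 2 + (j:ℝ)) ^ 2 := by nlinarith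
    nlinarith [mul_pos (sub_pos.mpr hs12) (sub_pos.mpr hCD)]
  have hpeel : ∀ s n, pFun c d s n = (∏ j ∈ Finset.range n, g s (j + 1)) * g s 0 :=
    fun s n => Finset.prod_range_succ' (fun j => g s j) n
  have hg10 := hgpos s1 hs1 0
  have hg20 := hgpos s2 hs2 0
  have h1' : Tendsto (fun n : ℕ => (n : ℝ) ^ t * ∏ j ∈ Finset.range n, g s1 (j + 1)) atTop
      (𝓝 (L1 / g s1 0)) := by
    refine Tendsto.congr ?_ (h1.div_const (g s1 0))
    intro n
    rw [hpeel, ← mul_assoc, mul_div_assoc, div_self hg10.ne', mul_one]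
  have h2' : Tendsto (fun n : ℕ => (n : ℝ) ^ t * ∏ j ∈ Finset.range n, g s2 (j + 1)) atTop
      (𝓝 (L2 / g s2 0)) := by
    refine Tendsto.congr ?_ (h2.div_const (g s2 0))
    intro n
    rw [hpeel, ← mul_assoc, mul_div_assoc, div_self hg20.ne', mul_one]
  have hle : L1 / g s1 0 ≤ L2 / g s2 0 := by
    refine le_of_tendsto_of_tendsto' h1' h2' fun n => ?_
    refine mul_le_mul_of_nonneg_left ?_ (Real.rpow_nonneg (Nat.cast_nonneg n) t)
    refine Finset.prod_le_prod (fun j _ => (hgpos s1 hs1 (j + 1)).le)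
      (fun j _ => (hgmono (j + 1)).le)
  have hM2 : 0 < L2 / g s2 0 := div_pos hL2 hg20
  have e1 : L1 = L1 / g s1 0 * g s1 0 := (div_mul_cancel₀ _ hg10.ne').symm
  have e2 : L2 = L2 / g s2 0 * g s2 0 := (div_mul_cancel₀ _ hg20.ne').symm
  nlinarith [hgmono 0]

lemma four_rpow_pos (γ : ℝ) : (0:ℝ) < (4:ℝ) ^ γ := Real.rpow_pos_of_pos (by norm_num) γ

lemma tendsto_T (γ : ℝ) (k : ℤ) (a lam : ℝ) (hγ : 0 < γ) (hk : 1 ≤ k) (hlam : 0 ≤ lam)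
    (hd : (k : ℝ) / 2 < 1 - γ + a) :
    Tendsto (fun n : ℕ => (n : ℝ) ^ (1 + γ + a - (1 - γ + a)) *
        pFun (1 + γ + a) (1 - γ + a) ((lam - (k : ℝ) ^ 2 / 4) / 4) n) atTop
      (𝓝 (T γ k a lam / 4 ^ γ)) := by
  have hk1 : (1:ℝ) ≤ (k:ℝ) := by exact_mod_cast hk
  have h4 := four_rpow_pos γ
  by_cases h : lam ≤ (k : ℝ) ^ 2 / 4
  · set β := Real.sqrt ((k:ℝ) ^ 2 / 4 - lam) with hβ
    have hβ0 : 0 ≤ β := Real.sqrt_nonneg _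
    have hβsq : β ^ 2 = (k:ℝ) ^ 2 / 4 - lam := Real.sq_sqrt (by linarith)
    have hβk : β ≤ (k:ℝ) / 2 := by nlinarith
    have hβd : β < 1 - γ + a := lt_of_le_of_lt hβk hd
    have hs : (lam - (k:ℝ) ^ 2 / 4) / 4 = -(β ^ 2) / 4 := by rw [hβsq]; ring
    have hC := Real.Gamma_pos_of_pos (show (0:ℝ) < (1 - γ + a + β) / 2 by linarith)
    have hD := Real.Gamma_pos_of_pos (show (0:ℝ) < (1 - γ + a - β) / 2 by linarith)
    have hT : T γ k a lam / 4 ^ γ =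
        Real.Gamma ((1 + γ + a + β) / 2) * Real.Gamma ((1 + γ + a - β) / 2) /
          (Real.Gamma ((1 - γ + a + β) / 2) * Real.Gamma ((1 - γ + a - β) / 2)) := by
      rw [T, if_pos h, ← hβ, ThetaI, mul_assoc, mul_div_assoc,
        mul_div_cancel_left₀ _ h4.ne']
    rw [hs, hT]
    exact tendsto_I (1 + γ + a) (1 - γ + a) β hβ0 hβd (by linarith)
  · set b := Real.sqrt (lam - (k:ℝ) ^ 2 / 4) with hb
    push_neg at h
    have hbsq : b ^ 2 = lam - (k:ℝ) ^ 2 / 4 := Real.sq_sqrt (by linarith)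
    have hs : (lam - (k:ℝ) ^ 2 / 4) / 4 = b ^ 2 / 4 := by rw [hbsq]
    have hT : T γ k a lam / 4 ^ γ =
        ‖Complex.Gamma (((1 + γ + a) / 2 : ℝ) + (b / 2 : ℝ) * Complex.I)‖ ^ 2 /
          ‖Complex.Gamma (((1 - γ + a) / 2 : ℝ) + (b / 2 : ℝ) * Complex.I)‖ ^ 2 := by
      rw [T, if_neg (not_le.mpr h), ← hb, ThetaR]
      have hDz : Complex.Gamma (((1 - γ + a) / 2 : ℝ) + (b / 2 : ℝ) * Complex.I) ≠ 0 :=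
        gamma_ne_zero_aux _ _ (by linarith)
      rw [mul_div_assoc, mul_div_cancel_left₀ _ h4.ne']
    rw [hs, hT]
    exact tendsto_R (1 + γ + a) (1 - γ + a) b (by linarith) (by linarith)

lemma T_pos (γ : ℝ) (k : ℤ) (a lam : ℝ) (hγ : 0 < γ) (hk : 1 ≤ k) (hlam : 0 ≤ lam)
    (hd : (k : ℝ) / 2 < 1 - γ + a) : 0 < T γ k a lam := by
  have hk1 : (1:ℝ) ≤ (k:ℝ) := by exact_mod_cast hk
  have h4 := four_rpow_pos γ
  rw [T]
  split_ifs with h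
  · set β := Real.sqrt ((k:ℝ) ^ 2 / 4 - lam) with hβ
    have hβ0 : 0 ≤ β := Real.sqrt_nonneg _
    have hβsq : β ^ 2 = (k:ℝ) ^ 2 / 4 - lam := Real.sq_sqrt (by linarith)
    have hβk : β ≤ (k:ℝ) / 2 := by nlinarith
    rw [ThetaI]
    apply div_pos
    · exact mul_pos (mul_pos h4 (Real.Gamma_pos_of_pos (by linarith)))
        (Real.Gamma_pos_of_pos (by linarith))
    · exact mul_pos (Real.Gamma_pos_of_pos (by linarith))
        (Real.Gamma_pos_of_pos (by linarith))
  · rw [ThetaR]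
    set b := Real.sqrt (lam - (k:ℝ) ^ 2 / 4)
    have hNz : Complex.Gamma (((1 + γ + a) / 2 : ℝ) + (b / 2 : ℝ) * Complex.I) ≠ 0 :=
      gamma_ne_zero_aux _ _ (by linarith)
    have hDz : Complex.Gamma (((1 - γ + a) / 2 : ℝ) + (b / 2 : ℝ) * Complex.I) ≠ 0 :=
      gamma_ne_zero_aux _ _ (by linarith)
    exact div_pos (mul_pos h4 (pow_pos (norm_pos_iff.mpr hNz) 2))
      (pow_pos (norm_pos_iff.mpr hDz) 2)

theorem stmt8 (n k : ℤ) (hk : 1 ≤ k) (γ : ℝ) (hγ : 0 < γ)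
    (hkn : (k : ℝ) < (n : ℝ) / 2 - γ) :
    ∀ a : ℝ, ((n : ℝ) - (k : ℝ) - 2) / 2 ≤ a →
      StrictMonoOn (fun lam : ℝ => T γ k a lam) (Set.Ici 0) := by
  intro a ha lam1 h1 lam2 h2 hlt
  simp only [Set.mem_Ici] at h1 h2
  have hk1 : (1:ℝ) ≤ (k:ℝ) := by exact_mod_cast hk
  have hd : (k:ℝ) / 2 < 1 - γ + a := by linarith
  have hd0 : (0:ℝ) < 1 - γ + a := by linarith
  have h4 := four_rpow_pos γ
  have ht1 := tendsto_T γ k a lam1 hγ hk h1 hd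
  have ht2 := tendsto_T γ k a lam2 hγ hk h2 hd
  have hTpos := T_pos γ k a lam2 hγ hk h2 hd
  have key := lim_lt (1 + γ + a - (1 - γ + a)) (1 + γ + a) (1 - γ + a)
      ((lam1 - (k:ℝ) ^ 2 / 4) / 4) ((lam2 - (k:ℝ) ^ 2 / 4) / 4) hd0 (by linarith)
      (by nlinarith) (by linarith) _ _ (div_pos hTpos h4) ht1 ht2
  show T γ k a lam1 < T γ k a lam2
  have := mul_lt_mul_of_pos_right key h4
  rwa [div_mul_cancel₀ _ h4.ne', div_mul_cancel₀ _ h4.ne'] at this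
end

section
/- Let n ≥ 4 be an integer and let γ be a real number with 0 < γ < n/2 − 1; set a₀ = (n−3)/2. Then for every real ϑ with ϑ > Ξ(n,γ), there exists a unique real λ > 1/4 such that T(γ,1,a₀,λ) = ϑ. -/
/-- `Ξ(n,γ) = 4^γ · Γ(n/4+γ/2−1/4)² / Γ(n/4−γ/2−1/4)²`. -/
noncomputable def Xi (n : ℤ) (γ : ℝ) : ℝ :=
  (4 : ℝ) ^ γ * Real.Gamma ((n : ℝ) / 4 + γ / 2 - 1 / 4) ^ 2 /
    Real.Gamma ((n : ℝ) / 4 - γ / 2 - 1 / 4) ^ 2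

section Aux
open Complex Filter Finset Topology

noncomputable def fsq (p q t : ℝ) : ℝ :=
  ‖Complex.Gamma ((p : ℂ) + (t : ℝ) * Complex.I)‖ ^ 2 /
    ‖Complex.Gamma ((q : ℂ) + (t : ℝ) * Complex.I)‖ ^ 2

lemma gamma_arg_ne (s t : ℝ) (hs : 0 < s) : Complex.Gamma ((s : ℂ) + (t : ℝ) * Complex.I) ≠ 0 := by
  apply Complex.Gamma_ne_zero_of_re_pos
  simpa using hs

lemma fsq_pos (p q t : ℝ) (hp : 0 < p) (hq : 0 < q) : 0 < fsq p q t := by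
  have h1 := gamma_arg_ne p t hp
  have h2 := gamma_arg_ne q t hq
  have := norm_pos_iff.mpr h1
  have := norm_pos_iff.mpr h2
  unfold fsq; positivity

lemma gamma_cont (s : ℝ) (hs : 0 < s) :
    Continuous (fun t : ℝ => Complex.Gamma ((s : ℂ) + (t : ℝ) * Complex.I)) := by
  rw [continuous_iff_continuousAt]
  intro t
  have hc : Continuous (fun t : ℝ => (s : ℂ) + (t : ℝ) * Complex.I) := by continuity
  apply ContinuousAt.comp ?_ hc.continuousAt
  apply (Complex.differentiableAt_Gamma _ ?_).continuousAt
  intro m h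
  have : ((s : ℂ) + (t : ℝ) * Complex.I).re = (-(m : ℂ)).re := by rw [h]
  simp at this
  have : (0:ℝ) < -(m:ℝ) := this ▸ hs
  have : (0:ℝ) ≤ (m:ℝ) := Nat.cast_nonneg m
  linarith

lemma fsq_continuous (p q : ℝ) (hp : 0 < p) (hq : 0 < q) : Continuous (fsq p q) := by
  apply Continuous.div
  · exact ((gamma_cont p hp).norm).pow 2
  · exact ((gamma_cont q hq).norm).pow 2
  · intro t
    have := norm_pos_iff.mpr (gamma_arg_ne q t hq)
    positivity

lemma fsq_zero (p q : ℝ) (hp : 0 < p) (hq : 0 < q) :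
    fsq p q 0 = Real.Gamma p ^ 2 / Real.Gamma q ^ 2 := by
  have h : ∀ s : ℝ, 0 < s → ‖Complex.Gamma ((s : ℂ) + (0 : ℝ) * Complex.I)‖ = Real.Gamma s := by
    intro s hs
    rw [show ((s : ℂ) + (0 : ℝ) * Complex.I) = (s : ℂ) by push_cast; ring, Complex.Gamma_ofReal,
      Complex.norm_real, Real.norm_eq_abs, abs_of_pos (Real.Gamma_pos_of_pos hs)]
  unfold fsq
  rw [h p hp, h q hq]

noncomputable def Pprod (s t : ℝ) (n : ℕ) : ℝ := ∏ j ∈ Finset.range (n + 1), ((s + j) ^ 2 + t ^ 2)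

lemma Pprod_pos (s t : ℝ) (hs : 0 < s) (n : ℕ) : 0 < Pprod s t n := by
  apply Finset.prod_pos
  intro j _
  have : (0:ℝ) < s + j := by positivity
  positivity

lemma norm_GammaSeq_sq (s t : ℝ) (n : ℕ) (hn : 0 < n) :
    ‖Complex.GammaSeq ((s : ℂ) + (t : ℝ) * Complex.I) n‖ ^ 2 =
      ((n : ℝ) ^ s) ^ 2 * (Nat.factorial n : ℝ) ^ 2 / Pprod s t n := by
  rw [Complex.GammaSeq]
  rw [norm_div, norm_mul, div_pow, mul_pow]
  congr 1
  · congr 1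
    · rw [show ((n:ℂ)) = ((n:ℝ):ℂ) by push_cast; ring,
        Complex.norm_cpow_eq_rpow_re_of_pos (by exact_mod_cast hn)]
      norm_num
    · simp
  · rw [norm_prod, ← Finset.prod_pow]
    unfold Pprod
    apply Finset.prod_congr rfl
    intro j _
    rw [Complex.sq_norm,
      show (s : ℂ) + (t:ℝ) * Complex.I + (j:ℕ) = ((s + j : ℝ) : ℂ) + (t:ℝ) * Complex.I by push_cast; ring,
      Complex.normSq_add_mul_I]

noncomputable def Rn (p q t : ℝ) (n : ℕ) : ℝ :=
  ‖Complex.GammaSeq ((p : ℂ) + (t : ℝ) * Complex.I) n‖ ^ 2 /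
    ‖Complex.GammaSeq ((q : ℂ) + (t : ℝ) * Complex.I) n‖ ^ 2

noncomputable def rho (p q u v : ℝ) (k : ℕ) : ℝ :=
  (((q + k) ^ 2 + v) * ((p + k) ^ 2 + u)) / (((q + k) ^ 2 + u) * ((p + k) ^ 2 + v))


lemma Rn_ratio (p q t₁ t₂ : ℝ) (hp : 0 < p) (hq : 0 < q) (n : ℕ) (hn : 0 < n) :
    Rn p q t₂ n = Rn p q t₁ n * ∏ k ∈ Finset.range (n + 1), rho p q (t₁ ^ 2) (t₂ ^ 2) k := by
  have hprod : ∏ k ∈ Finset.range (n + 1), rho p q (t₁ ^ 2) (t₂ ^ 2) k =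
      (Pprod q t₂ n * Pprod p t₁ n) / (Pprod q t₁ n * Pprod p t₂ n) := by
    unfold rho Pprod
    rw [Finset.prod_div_distrib, Finset.prod_mul_distrib, Finset.prod_mul_distrib]
  have np : (0:ℝ) < ((n : ℝ) ^ p) ^ 2 := by
    have : (0:ℝ) < (n:ℝ) := by exact_mod_cast hn
    positivity
  have nq : (0:ℝ) < ((n : ℝ) ^ q) ^ 2 := by
    have : (0:ℝ) < (n:ℝ) := by exact_mod_cast hn
    positivity
  have nf : (0:ℝ) < (Nat.factorial n : ℝ) ^ 2 := by positivity
  have P1 := Pprod_pos q t₁ hq n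
  have P2 := Pprod_pos q t₂ hq n
  have P3 := Pprod_pos p t₁ hp n
  have P4 := Pprod_pos p t₂ hp n
  unfold Rn
  rw [norm_GammaSeq_sq p t₂ n hn, norm_GammaSeq_sq q t₂ n hn,
    norm_GammaSeq_sq p t₁ n hn, norm_GammaSeq_sq q t₁ n hn, hprod]
  field_simp

lemma rho_ge_one (p q u v : ℝ) (hq : 0 < q) (hpq : q ≤ p) (hu : 0 ≤ u) (huv : u ≤ v) (k : ℕ) :
    1 ≤ rho p q u v k := by
  have hqk : (0:ℝ) < q + k := by positivity
  have hpk : (0:ℝ) < p + k := by linarith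
  have hd : (0:ℝ) < ((q + k) ^ 2 + u) * ((p + k) ^ 2 + v) := by
    apply mul_pos <;> nlinarith
  rw [rho, le_div_iff₀ hd]
  nlinarith [mul_nonneg (sub_nonneg.mpr huv) (sub_nonneg.mpr (sq_le_sq' (by linarith) (by linarith : q + (k:ℝ) ≤ p + k)))]

lemma rho_gt_one (p q u v : ℝ) (hq : 0 < q) (hpq : q < p) (hu : 0 ≤ u) (huv : u < v) (k : ℕ) :
    1 < rho p q u v k := by
  have hqk : (0:ℝ) < q + k := by positivity
  have hpk : (0:ℝ) < p + k := by linarith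
  have hd : (0:ℝ) < ((q + k) ^ 2 + u) * ((p + k) ^ 2 + v) := by
    apply mul_pos <;> nlinarith
  rw [rho, lt_div_iff₀ hd]
  nlinarith [mul_pos (sub_pos.mpr huv) (sub_pos.mpr (by nlinarith : (q + (k:ℝ)) ^ 2 < (p + k) ^ 2))]

lemma Rn_tendsto (p q t : ℝ) (hp : 0 < p) (hq : 0 < q) :
    Tendsto (fun n => Rn p q t n) atTop (𝓝 (fsq p q t)) := by
  have h1 := Complex.GammaSeq_tendsto_Gamma ((p : ℂ) + (t : ℝ) * Complex.I)
  have h2 := Complex.GammaSeq_tendsto_Gamma ((q : ℂ) + (t : ℝ) * Complex.I)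
  have hd : ‖Complex.Gamma ((q : ℂ) + (t : ℝ) * Complex.I)‖ ^ 2 ≠ 0 := by
    have := norm_pos_iff.mpr (gamma_arg_ne q t hq); positivity
  exact ((h1.norm.pow 2).div (h2.norm.pow 2) hd)

lemma Rn_nonneg (p q t : ℝ) (n : ℕ) : 0 ≤ Rn p q t n := by unfold Rn; positivity

lemma fsq_mul_prod_le (p q t₁ t₂ : ℝ) (hq : 0 < q) (hpq : q ≤ p) (ht₁ : 0 ≤ t₁) (ht : t₁ ≤ t₂)
    (N : ℕ) :
    fsq p q t₁ * ∏ k ∈ Finset.range (N + 1), rho p q (t₁ ^ 2) (t₂ ^ 2) k ≤ fsq p q t₂ := by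
  have hp : 0 < p := lt_of_lt_of_le hq hpq
  refine le_of_tendsto_of_tendsto ((Rn_tendsto p q t₁ hp hq).mul_const _) (Rn_tendsto p q t₂ hp hq) ?_
  filter_upwards [eventually_ge_atTop (max 1 N)] with n hn
  have hn1 : 0 < n := lt_of_lt_of_le one_pos (le_trans (le_max_left 1 N) hn)
  rw [Rn_ratio p q t₁ t₂ hp hq n hn1]
  apply mul_le_mul_of_nonneg_left ?_ (Rn_nonneg p q t₁ n)
  rw [← Finset.prod_range_mul_prod_Ico _ (show N + 1 ≤ n + 1 by omega)]
  have hone : (1:ℝ) ≤ ∏ k ∈ Finset.Ico (N + 1) (n + 1), rho p q (t₁ ^ 2) (t₂ ^ 2) k := by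
    calc (1:ℝ) = ∏ k ∈ Finset.Ico (N + 1) (n + 1), (1:ℝ) := by simp
    _ ≤ _ := Finset.prod_le_prod (by simp) (fun k _ =>
        rho_ge_one p q _ _ hq hpq (by positivity) (by nlinarith) k)
  have hnn : (0:ℝ) ≤ ∏ k ∈ Finset.range (N + 1), rho p q (t₁ ^ 2) (t₂ ^ 2) k := by
    apply Finset.prod_nonneg
    intro k _
    have := rho_ge_one p q (t₁ ^ 2) (t₂ ^ 2) hq hpq (by positivity) (by nlinarith) k
    linarith
  exact le_mul_of_one_le_right hnn hone

lemma fsq_strict_mono (p q t₁ t₂ : ℝ) (hq : 0 < q) (hpq : q < p) (ht₁ : 0 ≤ t₁) (ht : t₁ < t₂) :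
    fsq p q t₁ < fsq p q t₂ := by
  have hp : 0 < p := lt_trans hq hpq
  have h := fsq_mul_prod_le p q t₁ t₂ hq hpq.le ht₁ ht.le 0
  rw [Finset.prod_range_one] at h
  have h1 : 1 < rho p q (t₁ ^ 2) (t₂ ^ 2) 0 :=
    rho_gt_one p q _ _ hq hpq (by positivity) (by nlinarith) 0
  nlinarith [fsq_pos p q t₁ hp hq]

lemma one_add_sum_le_prod (f : ℕ → ℝ) (hf : ∀ k, 0 ≤ f k) (N : ℕ) :
    1 + ∑ k ∈ Finset.range N, f k ≤ ∏ k ∈ Finset.range N, (1 + f k) := by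
  induction N with
  | zero => simp
  | succ n ih =>
    rw [Finset.prod_range_succ, Finset.sum_range_succ]
    have hs : 0 ≤ ∑ k ∈ Finset.range n, f k := Finset.sum_nonneg fun k _ => hf k
    nlinarith [hf n]

lemma sum_aux_tendsto (p q : ℝ) (hq : 0 < q) (hpq : q < p) :
    Tendsto (fun N => ∑ k ∈ Finset.range N, 2 * (p - q) / (q + k)) atTop atTop := by
  have hc : 0 < 2 * (p - q) / (q + 1) := by
    apply div_pos (by linarith) (by linarith)
  apply tendsto_atTop_mono ?_
    (Tendsto.const_mul_atTop hc Real.tendsto_sum_range_one_div_nat_succ_atTop)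
  intro N
  rw [Finset.mul_sum]
  apply Finset.sum_le_sum
  intro k _
  rw [div_mul_div_comm, mul_one]
  apply div_le_div_of_nonneg_left (by linarith) (by positivity)
  nlinarith [Nat.cast_nonneg (α := ℝ) k]

lemma rho_tendsto (p q : ℝ) (hq : 0 < q) (hpq : q ≤ p) (k : ℕ) :
    Tendsto (fun t : ℝ => rho p q 0 (t ^ 2) k) atTop
      (𝓝 ((p + k) ^ 2 / (q + k) ^ 2)) := by
  have hqk : (0:ℝ) < q + k := by positivity
  have hpk : (0:ℝ) < p + k := by linarith
  have hti : Tendsto (fun t : ℝ => (p + k) ^ 2 + t ^ 2) atTop atTop :=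
    tendsto_atTop_add_const_left _ _ (tendsto_pow_atTop two_ne_zero)
  have hz : Tendsto (fun t : ℝ => ((q + k) ^ 2 - (p + k) ^ 2) / ((p + k) ^ 2 + t ^ 2))
      atTop (𝓝 0) := by
    have := hti.inv_tendsto_atTop.const_mul ((q + k) ^ 2 - (p + k) ^ 2)
    rw [mul_zero] at this
    exact this.congr fun t => by rw [div_eq_mul_inv]; rfl
  have h1 : Tendsto (fun t : ℝ => (p + k) ^ 2 / (q + k) ^ 2 *
      (1 + ((q + k) ^ 2 - (p + k) ^ 2) / ((p + k) ^ 2 + t ^ 2))) atTop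
      (𝓝 ((p + k) ^ 2 / (q + k) ^ 2)) := by
    have := ((tendsto_const_nhds : Tendsto (fun _ : ℝ => (1:ℝ)) atTop (𝓝 1)).add hz).const_mul
      ((p + k) ^ 2 / (q + k) ^ 2)
    simpa using this
  apply h1.congr
  intro t
  have hd : (0:ℝ) < (p + k) ^ 2 + t ^ 2 := by positivity
  unfold rho
  field_simp
  ring

lemma fsq_unbounded (p q : ℝ) (hq : 0 < q) (hpq : q < p) (M : ℝ) :
    ∃ t : ℝ, 0 ≤ t ∧ M < fsq p q t := by
  have hp : 0 < p := lt_trans hq hpq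
  have hf0 : 0 < fsq p q 0 := fsq_pos p q 0 hp hq
  set F := fsq p q 0 with hF
  -- choose N
  obtain ⟨N, hN⟩ := ((sum_aux_tendsto p q hq hpq).eventually_ge_atTop (M / F)).exists
  have hfk : ∀ k : ℕ, (0:ℝ) ≤ 2 * (p - q) / (q + k) := by
    intro k
    have hh : (0:ℝ) < q + k := by positivity
    exact div_nonneg (by linarith) hh.le
  have hsum : M / F ≤ ∑ k ∈ Finset.range (N + 1), 2 * (p - q) / (q + k) := by
    refine le_trans hN ?_
    rw [Finset.sum_range_succ]
    have := hfk N
    linarith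
  have hL : 1 + M / F ≤ ∏ k ∈ Finset.range (N + 1), (p + k) ^ 2 / (q + k) ^ 2 := by
    calc 1 + M / F ≤ 1 + ∑ k ∈ Finset.range (N + 1), 2 * (p - q) / (q + k) := by linarith
    _ ≤ ∏ k ∈ Finset.range (N + 1), (1 + 2 * (p - q) / (q + k)) :=
        one_add_sum_le_prod _ hfk _
    _ ≤ ∏ k ∈ Finset.range (N + 1), (p + k) ^ 2 / (q + k) ^ 2 := by
        apply Finset.prod_le_prod
        · intro k _
          have := hfk k
          linarith
        · intro k _
          have hqk : (0:ℝ) < q + k := by positivity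
          have hpk : (0:ℝ) < p + k := by linarith
          have h1 : 1 + 2 * (p - q) / (q + k) =
              ((q + k) ^ 2 + 2 * (p - q) * (q + k)) / (q + k) ^ 2 := by
            field_simp
          rw [h1, div_le_div_iff_of_pos_right (by positivity)]
          nlinarith [sq_nonneg (p - q)]
  have hMlt : M < F * ∏ k ∈ Finset.range (N + 1), (p + k) ^ 2 / (q + k) ^ 2 := by
    have : F * (1 + M / F) ≤ F * ∏ k ∈ Finset.range (N + 1), (p + k) ^ 2 / (q + k) ^ 2 :=
      mul_le_mul_of_nonneg_left hL hf0.le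
    have hFe : F * (1 + M / F) = F + M := by field_simp
    linarith [hFe ▸ this]
  have htend : Tendsto (fun t : ℝ => F * ∏ k ∈ Finset.range (N + 1), rho p q 0 (t ^ 2) k)
      atTop (𝓝 (F * ∏ k ∈ Finset.range (N + 1), (p + k) ^ 2 / (q + k) ^ 2)) := by
    exact (tendsto_finset_prod _ (fun k _ => rho_tendsto p q hq hpq.le k)).const_mul F
  obtain ⟨t, htM, ht0⟩ := (((tendsto_order.1 htend).1 M hMlt).and (eventually_ge_atTop (0:ℝ))).exists
  refine ⟨t, ht0, ?_⟩
  have := fsq_mul_prod_le p q 0 t hq hpq.le le_rfl ht0 N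
  rw [show (0:ℝ) ^ 2 = 0 by norm_num] at this
  linarith

lemma fsq_exists_unique (p q : ℝ) (hq : 0 < q) (hpq : q < p) (c : ℝ) (hc : fsq p q 0 < c) :
    ∃! t : ℝ, 0 < t ∧ fsq p q t = c := by
  have hp : 0 < p := lt_trans hq hpq
  obtain ⟨Tb, hTb0, hTbM⟩ := fsq_unbounded p q hq hpq c
  have hcont : ContinuousOn (fsq p q) (Set.Icc 0 Tb) :=
    (fsq_continuous p q hp hq).continuousOn
  have hmem : c ∈ Set.Icc (fsq p q 0) (fsq p q Tb) := ⟨hc.le, hTbM.le⟩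
  obtain ⟨t, ht, htc⟩ := intermediate_value_Icc hTb0 hcont hmem
  have ht0 : 0 < t := by
    rcases eq_or_lt_of_le ht.1 with h | h
    · exfalso
      rw [← h] at htc
      exact absurd htc (ne_of_lt hc)
    · exact h
  refine ⟨t, ⟨ht0, htc⟩, ?_⟩
  intro t' ⟨ht'0, ht'c⟩
  by_contra hne
  rcases lt_or_gt_of_ne hne with h | h
  · have := fsq_strict_mono p q t' t hq hpq ht'0.le h
    rw [htc, ht'c] at this
    exact lt_irrefl c this
  · have := fsq_strict_mono p q t t' hq hpq ht0.le h
    rw [htc, ht'c] at this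
    exact lt_irrefl c this

end Aux

theorem stmt10 (n : ℤ) (hn : 4 ≤ n) (γ : ℝ) (hγ : 0 < γ) (hγn : γ < (n : ℝ) / 2 - 1) :
    ∀ ϑ : ℝ, Xi n γ < ϑ →
      ∃! lam : ℝ, 1 / 4 < lam ∧ T γ 1 (((n : ℝ) - 3) / 2) lam = ϑ := by
  intro ϑ hϑ
  set a : ℝ := ((n : ℝ) - 3) / 2 with ha
  set p : ℝ := (1 + γ + a) / 2 with hpdef
  set q : ℝ := (1 - γ + a) / 2 with hqdef
  have hn4 : (4 : ℝ) ≤ (n : ℝ) := by exact_mod_cast hn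
  have hq : 0 < q := by rw [hqdef, ha]; linarith
  have hpq : q < p := by rw [hqdef, hpdef]; linarith
  have hp : 0 < p := lt_trans hq hpq
  have h4 : (0 : ℝ) < (4 : ℝ) ^ γ := Real.rpow_pos_of_pos (by norm_num) γ
  -- rewriting Xi
  have hp' : p = (n : ℝ) / 4 + γ / 2 - 1 / 4 := by rw [hpdef, ha]; ring
  have hq' : q = (n : ℝ) / 4 - γ / 2 - 1 / 4 := by rw [hqdef, ha]; ring
  have hXi : Xi n γ = (4 : ℝ) ^ γ * fsq p q 0 := by
    rw [Xi, fsq_zero p q hp hq, hp', hq', mul_div_assoc]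
  -- rewriting T
  have hTheta : ∀ b : ℝ, ThetaR γ a b = (4 : ℝ) ^ γ * fsq p q (b / 2) := by
    intro b
    rw [ThetaR, fsq, mul_div_assoc, hpdef, hqdef]
  have hT : ∀ lam : ℝ, 1 / 4 < lam →
      T γ 1 a lam = (4 : ℝ) ^ γ * fsq p q (Real.sqrt (lam - 1 / 4) / 2) := by
    intro lam hlam
    rw [T, if_neg (by push_cast; norm_num; linarith)]
    rw [show ((1 : ℤ) : ℝ) ^ 2 / 4 = 1 / 4 by norm_num, hTheta]
  -- solve
  set c : ℝ := ϑ / (4 : ℝ) ^ γ with hcdef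
  have hc : fsq p q 0 < c := by
    rw [hcdef, lt_div_iff₀ h4]
    rw [hXi] at hϑ
    linarith
  obtain ⟨t, ⟨ht0, htc⟩, huniq⟩ := fsq_exists_unique p q hq hpq c hc
  have hval : (4 : ℝ) ^ γ * c = ϑ := by
    rw [hcdef, mul_div_cancel₀ _ (ne_of_gt h4)]
  refine ⟨4 * t ^ 2 + 1 / 4, ⟨by nlinarith, ?_⟩, ?_⟩
  · rw [hT _ (by nlinarith)]
    rw [show 4 * t ^ 2 + 1 / 4 - 1 / 4 = (2 * t) ^ 2 by ring, Real.sqrt_sq (by linarith),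
      show 2 * t / 2 = t by ring, htc, hval]
  · intro lam' ⟨hl', he'⟩
    have hsq : Real.sqrt (lam' - 1 / 4) > 0 := Real.sqrt_pos.mpr (by linarith)
    have ht'c : fsq p q (Real.sqrt (lam' - 1 / 4) / 2) = c := by
      rw [hT _ hl'] at he'
      rw [hcdef, ← he', mul_div_cancel_left₀ _ (ne_of_gt h4)]
    have hteq : Real.sqrt (lam' - 1 / 4) / 2 = t :=
      huniq _ ⟨by linarith, ht'c⟩
    have h2 : Real.sqrt (lam' - 1 / 4) = 2 * t := by linarith [hteq]
    have h3 : lam' - 1 / 4 = (2 * t) ^ 2 := by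
      rw [← h2, Real.sq_sqrt (by linarith)]
    nlinarith [h3]
end

section
/- For every real γ with 0 < γ < 1/2, one has Ξ(3,γ) ≥ ((3+2γ)/(3−2γ)) · Q(3,γ), where Ξ(3,γ) = 4^γ · Γ(3/4+γ/2−1/4)² / Γ(3/4−γ/2−1/4)² and Q(3,γ) = 4^γ · Γ((3+2γ)/4) · Γ((1+2γ)/4) / (Γ((3−2γ)/4) · Γ((1−2γ)/4)). That is, for n = 3 the inequality Ξ(n,γ) < ((n+2γ)/(n−2γ)) · Q(n,γ) fails for all 0 < γ < 1/2. -/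
open Real Filter Finset Topology

private lemma exp_quad' (x : ℝ) (hx : 0 ≤ x) : 1 + x + x^2/4 ≤ Real.exp x := by
  have h := Real.add_one_le_exp (x/2)
  have hp := Real.exp_pos (x/2)
  have h2 : (1 + x/2)^2 ≤ (Real.exp (x/2))^2 := by nlinarith
  have h3 : Real.exp (x/2) ^ 2 = Real.exp x := by
    rw [← Real.exp_nat_mul]; push_cast; ring_nf
  nlinarith

private lemma keyA' (t : ℝ) (h0 : 0 < t) (h1 : t < 1/2) :
    (3+2*t)*(1+t)^2*(1-2*t) ≤ (4:ℝ)^t * ((3-2*t)*(1-t)^2*(1+2*t)) := by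
  have hlog : (693/500 : ℝ) ≤ Real.log 4 := by
    have h2 := Real.log_two_gt_d9
    have h4 : Real.log 4 = 2 * Real.log 2 := by
      rw [show (4:ℝ) = 2^(2:ℕ) by norm_num, Real.log_pow]; push_cast; ring
    rw [h4]; norm_num at h2 ⊢; linarith
  have hlt : (0:ℝ) ≤ Real.log 4 * t := by
    apply mul_nonneg (by linarith) h0.le
  have h4t : (4:ℝ)^t = Real.exp (Real.log 4 * t) := Real.rpow_def_of_pos (by norm_num) t
  have hq := exp_quad' (Real.log 4 * t) hlt
  have hB : (0:ℝ) ≤ (3-2*t)*(1-t)^2*(1+2*t) := by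
    apply mul_nonneg (mul_nonneg (by linarith) (sq_nonneg _)) (by linarith)
  have core : (3+2*t)*(1+t)^2*(1-2*t) ≤
      (1+(693/500)*t+((693/500)*t)^2/4)*((3-2*t)*(1-t)^2*(1+2*t)) := by
    nlinarith [mul_nonneg h0.le (sq_nonneg (t - 631/10000)),
      mul_nonneg (pow_nonneg h0.le 4) (show (0:ℝ) ≤ 1/4 - t^2 by nlinarith),
      pow_nonneg h0.le 4, pow_nonneg h0.le 5, sq_nonneg t, h0.le]
  have mono : (1+(693/500)*t+((693/500)*t)^2/4) ≤
      1 + Real.log 4 * t + (Real.log 4 * t)^2/4 := by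
    nlinarith [mul_nonneg (sub_nonneg.2 hlog) h0.le,
      mul_nonneg (mul_nonneg (sub_nonneg.2 hlog)
        (show (0:ℝ) ≤ Real.log 4 + 693/500 by linarith)) (sq_nonneg t)]
  calc (3+2*t)*(1+t)^2*(1-2*t)
      ≤ (1+(693/500)*t+((693/500)*t)^2/4)*((3-2*t)*(1-t)^2*(1+2*t)) := core
    _ ≤ (1 + Real.log 4 * t + (Real.log 4 * t)^2/4)*((3-2*t)*(1-t)^2*(1+2*t)) :=
        mul_le_mul_of_nonneg_right mono hB
    _ ≤ Real.exp (Real.log 4 * t) * ((3-2*t)*(1-t)^2*(1+2*t)) :=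
        mul_le_mul_of_nonneg_right hq hB
    _ = (4:ℝ)^t * ((3-2*t)*(1-t)^2*(1+2*t)) := by rw [h4t]

private lemma keyB' (t : ℝ) (h0 : 0 < t) (h1 : t < 1/2) :
    Real.Gamma (3/2+t) * Real.Gamma (3/2-t/2)^2 ≤ Real.Gamma (3/2-t) * Real.Gamma (3/2+t/2)^2 := by
  have hseq : ∀ n : ℕ, 1 ≤ n →
      Real.GammaSeq (3/2+t) n * Real.GammaSeq (3/2-t/2) n ^2 ≤
      Real.GammaSeq (3/2-t) n * Real.GammaSeq (3/2+t/2) n ^2 := by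
    intro n hn
    have hnp : (0:ℝ) < n := by exact_mod_cast hn
    have hfac : (0:ℝ) < (n.factorial:ℝ) := by exact_mod_cast Nat.factorial_pos n
    have hprod : ∀ s : ℝ, 0 < s → 0 < ∏ j ∈ Finset.range (n + 1), (s + (j:ℝ)) := by
      intro s hs
      apply Finset.prod_pos
      intro j _
      have : (0:ℝ) ≤ (j:ℝ) := Nat.cast_nonneg j
      linarith
    have ha := hprod (3/2+t) (by linarith)
    have hb := hprod (3/2-t/2) (by linarith)
    have hc := hprod (3/2-t) (by linarith)
    have hd := hprod (3/2+t/2) (by linarith)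
    simp only [Real.GammaSeq]
    rw [div_pow, div_mul_div_comm, div_pow, div_mul_div_comm]
    rw [div_le_div_iff₀ (by positivity) (by positivity)]
    have e1 : (n:ℝ)^((3:ℝ)/2+t) * ((n:ℝ)^((3:ℝ)/2-t/2))^2 =
        (n:ℝ)^((3:ℝ)/2-t) * ((n:ℝ)^((3:ℝ)/2+t/2))^2 := by
      rw [sq, sq, ← Real.rpow_add hnp, ← Real.rpow_add hnp, ← Real.rpow_add hnp,
        ← Real.rpow_add hnp]
      ring_nf
    have hkey : (∏ j ∈ Finset.range (n + 1), (3/2-t + (j:ℝ))) *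
        (∏ j ∈ Finset.range (n + 1), (3/2+t/2 + (j:ℝ)))^2 ≤
        (∏ j ∈ Finset.range (n + 1), (3/2+t + (j:ℝ))) *
        (∏ j ∈ Finset.range (n + 1), (3/2-t/2 + (j:ℝ)))^2 := by
      rw [← Finset.prod_pow, ← Finset.prod_mul_distrib,
          ← Finset.prod_pow, ← Finset.prod_mul_distrib]
      apply Finset.prod_le_prod
      · intro j _
        have hj : (0:ℝ) ≤ (j:ℝ) := Nat.cast_nonneg j
        apply mul_nonneg (by linarith) (sq_nonneg _)
      · intro j _
        have hj : (0:ℝ) ≤ (j:ℝ) := Nat.cast_nonneg j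
        nlinarith [mul_pos (mul_pos h0 h0) h0]
    calc ((n:ℝ)^((3:ℝ)/2+t) * (n.factorial:ℝ) * ((n:ℝ)^((3:ℝ)/2-t/2) * (n.factorial:ℝ))^2) *
          ((∏ j ∈ Finset.range (n + 1), (3/2-t + (j:ℝ))) *
           (∏ j ∈ Finset.range (n + 1), (3/2+t/2 + (j:ℝ)))^2)
        = ((n:ℝ)^((3:ℝ)/2+t) * ((n:ℝ)^((3:ℝ)/2-t/2))^2) * (n.factorial:ℝ)^3 *
          ((∏ j ∈ Finset.range (n + 1), (3/2-t + (j:ℝ))) *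
           (∏ j ∈ Finset.range (n + 1), (3/2+t/2 + (j:ℝ)))^2) := by ring
      _ ≤ ((n:ℝ)^((3:ℝ)/2+t) * ((n:ℝ)^((3:ℝ)/2-t/2))^2) * (n.factorial:ℝ)^3 *
          ((∏ j ∈ Finset.range (n + 1), (3/2+t + (j:ℝ))) *
           (∏ j ∈ Finset.range (n + 1), (3/2-t/2 + (j:ℝ)))^2) := by
            apply mul_le_mul_of_nonneg_left hkey
            positivity
      _ = ((n:ℝ)^((3:ℝ)/2-t) * (n.factorial:ℝ) * ((n:ℝ)^((3:ℝ)/2+t/2) * (n.factorial:ℝ))^2) *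
          ((∏ j ∈ Finset.range (n + 1), (3/2+t + (j:ℝ))) *
           (∏ j ∈ Finset.range (n + 1), (3/2-t/2 + (j:ℝ)))^2) := by
            rw [e1]; ring
  have lim1 : Tendsto (fun n => Real.GammaSeq (3/2+t) n * Real.GammaSeq (3/2-t/2) n ^2)
      atTop (𝓝 (Real.Gamma (3/2+t) * Real.Gamma (3/2-t/2)^2)) :=
    (Real.GammaSeq_tendsto_Gamma _).mul ((Real.GammaSeq_tendsto_Gamma _).pow 2)
  have lim2 : Tendsto (fun n => Real.GammaSeq (3/2-t) n * Real.GammaSeq (3/2+t/2) n ^2)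
      atTop (𝓝 (Real.Gamma (3/2-t) * Real.Gamma (3/2+t/2)^2)) :=
    (Real.GammaSeq_tendsto_Gamma _).mul ((Real.GammaSeq_tendsto_Gamma _).pow 2)
  exact le_of_tendsto_of_tendsto lim1 lim2 (eventually_atTop.2 ⟨1, hseq⟩)

set_option maxHeartbeats 1600000 in
theorem stmt18 (γ : ℝ) (hγ : 0 < γ) (hγ' : γ < 1 / 2) :
    ((3 + 2 * γ) / (3 - 2 * γ)) *
        ((4 : ℝ) ^ γ * Real.Gamma ((3 + 2 * γ) / 4) * Real.Gamma ((1 + 2 * γ) / 4) /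
          (Real.Gamma ((3 - 2 * γ) / 4) * Real.Gamma ((1 - 2 * γ) / 4))) ≤
      (4 : ℝ) ^ γ * Real.Gamma (3 / 4 + γ / 2 - 1 / 4) ^ 2 /
        Real.Gamma (3 / 4 - γ / 2 - 1 / 4) ^ 2 := by
  -- notation for powers of two
  set P : ℝ := (2:ℝ)^(2*γ) with hP
  set Q : ℝ := (2:ℝ)^((1-2*γ)/2) with hQ
  have hPpos : 0 < P := Real.rpow_pos_of_pos two_pos _
  have hQpos : 0 < Q := Real.rpow_pos_of_pos two_pos _
  have hRpos : 0 < Real.sqrt π := Real.sqrt_pos.2 Real.pi_pos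
  have h4 : (4:ℝ)^γ = P := by
    rw [hP, show (4:ℝ) = 2^(2:ℕ) by norm_num, ← Real.rpow_natCast 2 2,
      ← Real.rpow_mul (by norm_num : (0:ℝ) ≤ 2)]
    norm_num
  have hpow : P * Q = (2:ℝ)^((1+2*γ)/2) := by
    rw [hP, hQ, ← Real.rpow_add two_pos]; ring_nf
  -- duplication formulas
  have hdup1 := Real.Gamma_mul_Gamma_add_half ((1+2*γ)/4)
  rw [show (1+2*γ)/4 + 1/2 = (3+2*γ)/4 by ring, show 2*((1+2*γ)/4) = 1/2+γ by ring,
    show (1:ℝ) - (1/2+γ) = (1-2*γ)/2 by ring] at hdup1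
  have hdup2 := Real.Gamma_mul_Gamma_add_half ((1-2*γ)/4)
  rw [show (1-2*γ)/4 + 1/2 = (3-2*γ)/4 by ring, show 2*((1-2*γ)/4) = 1/2-γ by ring,
    show (1:ℝ) - (1/2-γ) = (1+2*γ)/2 by ring, ← hpow] at hdup2
  -- recurrence
  have hr1 := Real.Gamma_add_one (show (1/2+γ:ℝ) ≠ 0 by positivity)
  rw [show (1/2+γ:ℝ) + 1 = 3/2+γ by ring] at hr1
  have hr2 := Real.Gamma_add_one (show (1/2-γ:ℝ) ≠ 0 by intro h; nlinarith)
  rw [show (1/2-γ:ℝ) + 1 = 3/2-γ by ring] at hr2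
  have hr3 := Real.Gamma_add_one (show (1/2+γ/2:ℝ) ≠ 0 by positivity)
  rw [show (1/2+γ/2:ℝ) + 1 = 3/2+γ/2 by ring] at hr3
  have hr4 := Real.Gamma_add_one (show (1/2-γ/2:ℝ) ≠ 0 by intro h; nlinarith)
  rw [show (1/2-γ/2:ℝ) + 1 = 3/2-γ/2 by ring] at hr4
  -- positivity of Gammas
  have gp1 : 0 < Real.Gamma (1/2+γ) := Real.Gamma_pos_of_pos (by linarith)
  have gp2 : 0 < Real.Gamma (1/2-γ) := Real.Gamma_pos_of_pos (by linarith)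
  have gp3 : 0 < Real.Gamma (1/2+γ/2) := Real.Gamma_pos_of_pos (by linarith)
  have gp4 : 0 < Real.Gamma (1/2-γ/2) := Real.Gamma_pos_of_pos (by linarith)
  have gp5 : 0 < Real.Gamma (3/2+γ) := Real.Gamma_pos_of_pos (by linarith)
  have gp6 : 0 < Real.Gamma (3/2-γ) := Real.Gamma_pos_of_pos (by linarith)
  have gp7 : 0 < Real.Gamma (3/2+γ/2) := Real.Gamma_pos_of_pos (by linarith)
  have gp8 : 0 < Real.Gamma (3/2-γ/2) := Real.Gamma_pos_of_pos (by linarith)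
  have gq1 : 0 < Real.Gamma ((1+2*γ)/4) := Real.Gamma_pos_of_pos (by linarith)
  have gq2 : 0 < Real.Gamma ((1-2*γ)/4) := Real.Gamma_pos_of_pos (by linarith)
  -- main two inequalities
  have ineqA : (3+2*γ)*(1-2*γ)/((3-2*γ)*(1+2*γ)) ≤ (4:ℝ)^γ*(1-γ)^2/(1+γ)^2 := by
    rw [div_le_div_iff₀ (by nlinarith) (by positivity)]
    calc (3+2*γ)*(1-2*γ)*(1+γ)^2 = (3+2*γ)*(1+γ)^2*(1-2*γ) := by ring
      _ ≤ (4:ℝ)^γ*((3-2*γ)*(1-γ)^2*(1+2*γ)) := keyA' γ hγ hγ'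
      _ = (4:ℝ)^γ*(1-γ)^2*((3-2*γ)*(1+2*γ)) := by ring
  have ineqB : Real.Gamma (3/2+γ)/Real.Gamma (3/2-γ) ≤
      Real.Gamma (3/2+γ/2)^2/Real.Gamma (3/2-γ/2)^2 := by
    rw [div_le_div_iff₀ gp6 (by positivity)]
    exact (keyB' γ hγ hγ').trans_eq (mul_comm _ _)
  have hfin : ((3+2*γ)*(1-2*γ)/((3-2*γ)*(1+2*γ))) * (Real.Gamma (3/2+γ)/Real.Gamma (3/2-γ)) ≤
      ((4:ℝ)^γ*(1-γ)^2/(1+γ)^2) * (Real.Gamma (3/2+γ/2)^2/Real.Gamma (3/2-γ/2)^2) := by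
    apply mul_le_mul ineqA ineqB (by positivity) (by positivity)
  calc ((3 + 2 * γ) / (3 - 2 * γ)) *
        ((4 : ℝ) ^ γ * Real.Gamma ((3 + 2 * γ) / 4) * Real.Gamma ((1 + 2 * γ) / 4) /
          (Real.Gamma ((3 - 2 * γ) / 4) * Real.Gamma ((1 - 2 * γ) / 4)))
      = ((3 + 2 * γ) / (3 - 2 * γ)) *
        (P * (Real.Gamma ((1 + 2 * γ) / 4) * Real.Gamma ((3 + 2 * γ) / 4)) /
          (Real.Gamma ((1 - 2 * γ) / 4) * Real.Gamma ((3 - 2 * γ) / 4))) := by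
        rw [h4]; ring
    _ = ((3 + 2 * γ) / (3 - 2 * γ)) *
        (P * (Real.Gamma (1/2+γ) * Q * Real.sqrt π) /
          (Real.Gamma (1/2-γ) * (P * Q) * Real.sqrt π)) := by
        rw [hdup1, hdup2]
    _ = ((3+2*γ)*(1-2*γ)/((3-2*γ)*(1+2*γ))) * (Real.Gamma (3/2+γ)/Real.Gamma (3/2-γ)) := by
        rw [hr1, hr2, div_mul_div_comm, div_mul_div_comm, div_eq_div_iff]
        · ring
        · have : (0:ℝ) < (3 - 2*γ) * (Real.Gamma (1/2-γ) * (P * Q) * Real.sqrt π) := by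
            apply mul_pos (by linarith)
            exact mul_pos (mul_pos gp2 (mul_pos hPpos hQpos)) hRpos
          exact this.ne'
        · have : (0:ℝ) < (3 - 2*γ) * (1 + 2*γ) * ((1/2 - γ) * Real.Gamma (1/2-γ)) := by
            apply mul_pos (by nlinarith)
            exact mul_pos (by linarith) gp2
          exact this.ne'
    _ ≤ ((4:ℝ)^γ*(1-γ)^2/(1+γ)^2) * (Real.Gamma (3/2+γ/2)^2/Real.Gamma (3/2-γ/2)^2) := hfin
    _ = (4 : ℝ) ^ γ * Real.Gamma (3 / 4 + γ / 2 - 1 / 4) ^ 2 /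
        Real.Gamma (3 / 4 - γ / 2 - 1 / 4) ^ 2 := by
        rw [show (3:ℝ)/4 + γ/2 - 1/4 = 1/2+γ/2 by ring,
          show (3:ℝ)/4 - γ/2 - 1/4 = 1/2-γ/2 by ring, hr3, hr4, mul_pow, mul_pow,
          div_mul_div_comm, div_eq_div_iff]
        · ring
        · have : (0:ℝ) < (1+γ)^2 * ((1/2 - γ/2)^2 * Real.Gamma (1/2-γ/2)^2) := by
            apply mul_pos (by positivity)
            apply mul_pos (pow_pos (by linarith) 2) (pow_pos gp4 2)
          exact this.ne'
        · exact (pow_pos gp4 2).ne'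
end
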